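/- Under Algorithm 1, from configuration Conf RW-MB the execution achieves gathering: all robots eventually occupy a single node and remain there forever. -/

import Mathlib

set_option autoImplicit false

/-! ### Luminous myopic robots on an anonymous ring: basic model -/

/-- A configuration of `R` luminous robots with light colors in `C`
on an anonymous ring with `N` nodes (the nodes are `ZMod N`). -/
structure Config (N R : ℕ) (C : Type) where
  pos : Fin R → ZMod N
  light : Fin R → C

namespace Gathering

variable {N R : ℕ} {C : Type}

/-- The set of light colors present at node `u`. -/
def colorsAt (cfg : Config N R C) (u : ZMod N) : Set C :=
  {c | ∃ r, cfg.pos r = u ∧ cfg.light r = c}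

/-- Node `u` hosts at least one robot. -/
def occupiedNode (cfg : Config N R C) (u : ZMod N) : Prop :=
  ∃ r, cfg.pos r = u

/-- The view from node `u` with visibility range `φ`, in orientation `dir`:
the set of colors at signed offset `k`, for `|k| ≤ φ` (and `∅` beyond the range). -/
def nodeView (φ : ℕ) (cfg : Config N R C) (u : ZMod N) (dir : Bool) : ℤ → Set C :=
  fun k => if |k| ≤ (φ : ℤ) then
      colorsAt cfg (u + (if dir then (k : ZMod N) else ((-k : ℤ) : ZMod N)))
    else ∅

/-- Node `u` is a border node: it is occupied, all `φ` nodes on one side are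
empty, and some node within distance `φ` on the other side is occupied. -/
def isBorderNode (φ : ℕ) (cfg : Config N R C) (u : ZMod N) : Prop :=
  occupiedNode cfg u ∧
  ∃ dir : Bool,
    (∀ k : ℤ, 1 ≤ k → k ≤ (φ : ℤ) →
      ¬ occupiedNode cfg (u + (if dir then (k : ZMod N) else ((-k : ℤ) : ZMod N)))) ∧
    (∃ k : ℤ, 1 ≤ k ∧ k ≤ (φ : ℤ) ∧
      occupiedNode cfg (u + (if dir then ((-k : ℤ) : ZMod N) else (k : ZMod N))))

/-- Robot `r` is a border robot. -/
def isBorderRobot (φ : ℕ) (cfg : Config N R C) (r : Fin R) : Prop :=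
  isBorderNode φ cfg (cfg.pos r)

/-- The borders of a configuration: an occupied node together with a direction
in which the next `φ` nodes are all empty (their number is always even). -/
def borderPairs (φ : ℕ) (cfg : Config N R C) : Set (ZMod N × Bool) :=
  {p | occupiedNode cfg p.1 ∧
    ∀ k : ℤ, 1 ≤ k → k ≤ (φ : ℤ) →
      ¬ occupiedNode cfg (p.1 + (if p.2 then (k : ZMod N) else ((-k : ℤ) : ZMod N)))}

/-- Ring distance between two nodes. -/
def ringDist (u v : ZMod N) : ℕ := min (u - v).val (v - u).val

/-- Robots `r` and `r'` can observe each other. -/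
def canSee (φ : ℕ) (cfg : Config N R C) (r r' : Fin R) : Prop :=
  ringDist (cfg.pos r) (cfg.pos r') ≤ φ

/-- The visibility graph of the configuration is connected. -/
def VisConnected (φ : ℕ) (cfg : Config N R C) : Prop :=
  ∀ r r' : Fin R, Relation.ReflTransGen (canSee φ cfg) r r'

/-- The span of a configuration: the least `m` such that all occupied nodes fit
in a window of `m + 1` consecutive nodes.  In a configuration with exactly two
borders this is the distance `D` between the two border nodes. -/
noncomputable def spanDist (cfg : Config N R C) : ℕ :=
  sInf {m : ℕ | ∃ b : ZMod N, ∀ u, occupiedNode cfg u → ∃ i : ℕ, i ≤ m ∧ u = b + (i : ZMod N)}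

/-! ### Algorithms and asynchronous executions -/

/-- A deterministic algorithm for luminous robots in the full-light model:
given the robot's own color and its (oriented) view, output a new color and a
movement (`+1`, `0` or `-1`, relative to the orientation of the view). -/
structure Algo (C : Type) where
  out : C → (ℤ → Set C) → C × SignType

/-- The destination of a movement `m` from node `u`, for view orientation `dir`. -/
def moveTarget (u : ZMod N) (dir : Bool) (m : SignType) : ZMod N :=
  u + (if dir then ((m : ℤ) : ZMod N) else ((-(m : ℤ) : ℤ) : ZMod N))

/-- An execution of algorithm `A` under a fair asynchronous scheduler.
At each instant every robot either stays idle, performs a Look (together with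
the deterministic Compute, recording a plan: a new color and a destination
node; the orientation of the snapshot is chosen adversarially, as robots are
disoriented), becomes visible with its new color (end of the Compute phase,
keeping its pending plan), or performs its atomic Move, completing the cycle.
A robot `r` with `plan t r ≠ none` is a robot whose view may be outdated. -/
structure AsyncExec (N R : ℕ) (C : Type) (φ : ℕ) (A : Algo C) where
  cfg : ℕ → Config N R C
  plan : ℕ → Fin R → Option (C × ZMod N)
  init_plan : ∀ r, plan 0 r = none
  step : ∀ (t : ℕ) (r : Fin R),
      ((cfg (t+1)).pos r = (cfg t).pos r ∧ (cfg (t+1)).light r = (cfg t).light r ∧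
        plan (t+1) r = plan t r)
    ∨ (plan t r = none ∧ (cfg (t+1)).pos r = (cfg t).pos r ∧
        (cfg (t+1)).light r = (cfg t).light r ∧
        ∃ dir : Bool,
          plan (t+1) r =
            some ((A.out ((cfg t).light r) (nodeView φ (cfg t) ((cfg t).pos r) dir)).1,
              moveTarget ((cfg t).pos r) dir
                (A.out ((cfg t).light r) (nodeView φ (cfg t) ((cfg t).pos r) dir)).2))
    ∨ (∃ c u, plan t r = some (c, u) ∧ (cfg (t+1)).pos r = (cfg t).pos r ∧
        (cfg (t+1)).light r = c ∧ plan (t+1) r = some (c, u))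
    ∨ (∃ c u, plan t r = some (c, u) ∧ (cfg (t+1)).pos r = u ∧
        (cfg (t+1)).light r = c ∧ plan (t+1) r = none)
  fair : ∀ (r : Fin R) (t : ℕ), ∃ t', t ≤ t' ∧ plan t' r ≠ none ∧ plan (t'+1) r = none

/-- The execution achieves gathering: from some time on, all robots occupy a
single node and remain there forever. -/
def AchievesGathering {N R : ℕ} {C : Type} {φ : ℕ} {A : Algo C}
    (e : AsyncExec N R C φ A) : Prop :=
  ∃ (t : ℕ) (u : ZMod N), ∀ t', t ≤ t' → ∀ r, (e.cfg t').pos r = u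

/-! ### Initial configurations -/

/-- The robots occupy a segment `G'` of `Minit` nodes with base (border) node
`b`: both endpoints of the segment are occupied and are borders (the `φ` nodes
beyond each endpoint are empty), every occupied node lies in the segment,
consecutive occupied nodes are at distance at most `φ` (`H_init ≤ φ`, i.e. the
visibility graph is connected), and `Oinit` is the number of occupied nodes of
the segment. -/
def SegmentInitOn (φ : ℕ) (cfg : Config N R C) (b : ZMod N) (Minit Oinit : ℕ) : Prop :=
  2 ≤ Minit ∧
  occupiedNode cfg b ∧ occupiedNode cfg (b + ((Minit - 1 : ℕ) : ZMod N)) ∧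
  (∀ u, occupiedNode cfg u → ∃ i : ℕ, i < Minit ∧ u = b + (i : ZMod N)) ∧
  (∀ k : ℕ, 1 ≤ k → k ≤ φ →
    ¬ occupiedNode cfg (b - (k : ZMod N)) ∧
    ¬ occupiedNode cfg (b + ((Minit - 1 : ℕ) : ZMod N) + (k : ZMod N))) ∧
  (∀ i : ℕ, i + 1 < Minit → occupiedNode cfg (b + (i : ZMod N)) →
    ∃ j : ℕ, i < j ∧ j ≤ i + φ ∧ j < Minit ∧ occupiedNode cfg (b + (j : ZMod N))) ∧
  Oinit = {i : Fin Minit | occupiedNode cfg (b + ((i : ℕ) : ZMod N))}.ncard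

/-- Admissible initial configuration: all robots have the color `white`, and
the robots occupy a segment with two borders and connected visibility graph. -/
def AdmissibleInit (φ : ℕ) (cfg : Config N R C) (white : C) (Minit Oinit : ℕ) : Prop :=
  (∀ r, cfg.light r = white) ∧ ∃ b : ZMod N, SegmentInitOn φ cfg b Minit Oinit

/-! ### Edge-view symmetry and cautiousness -/

/-- Robots `r1` and `r2` are indistinguishable: they have the same color and
the same view (up to reversal, as robots are disoriented). -/
def viewsEq (φ : ℕ) (cfg : Config N R C) (r1 r2 : Fin R) : Prop :=
  cfg.light r1 = cfg.light r2 ∧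
  (nodeView φ cfg (cfg.pos r1) true = nodeView φ cfg (cfg.pos r2) true ∨
   nodeView φ cfg (cfg.pos r1) true = nodeView φ cfg (cfg.pos r2) false)

/-- Definition 20: a configuration is edge-view-symmetric if at least two
distinct nodes host robots and there is an edge `(u_i, u_{i+1})` such that for
every `k ≥ 0`, every robot at `u_{i-k}` has an indistinguishable counterpart at
`u_{i+k+1}`. -/
def EdgeViewSymmetric (φ : ℕ) (cfg : Config N R C) : Prop :=
  (∃ u v : ZMod N, u ≠ v ∧ occupiedNode cfg u ∧ occupiedNode cfg v) ∧
  ∃ i : ZMod N, ∀ (k : ℕ) (r1 : Fin R), cfg.pos r1 = i - (k : ZMod N) →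
    ∃ r2 : Fin R, cfg.pos r2 = i + (k : ZMod N) + 1 ∧ viewsEq φ cfg r1 r2

/-- Definition 23: an algorithm is cautious if robots only ever move toward
other occupied nodes (they never expand the span of the visibility graph). -/
def Cautious (φ : ℕ) (A : Algo C) : Prop :=
  ∀ (c : C) (v : ℤ → Set C),
    ((A.out c v).2 = 1 → ∃ k : ℤ, 1 ≤ k ∧ k ≤ (φ : ℤ) ∧ v k ≠ ∅) ∧
    ((A.out c v).2 = -1 → ∃ k : ℤ, 1 ≤ k ∧ k ≤ (φ : ℤ) ∧ v (-k) ≠ ∅)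

end Gathering

namespace Gathering

/-! ### Algorithm 1 (three colors) -/

/-- The three light colors of Algorithm 1. -/
inductive C3 : Type
  | White
  | Red
  | Blue
deriving DecidableEq

open Classical in
/-- The rules of Algorithm 1, for a view oriented so that the `φ` nodes at
negative offsets are empty (the observing robot is a border robot and the
positive direction points inward), in priority order
R1, R2a, R2b, R3a, R3b, R4a, R4b, R5. -/
noncomputable def algo1Rules (φ : ℕ) (c : C3) (v : ℤ → Set C3) : C3 × SignType :=
  -- R1 : ∅^φ [W!] (¬∅^φ)  ::  R
  if c = C3.White ∧ v 0 = {C3.White} then (C3.Red, 0)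
  -- R2a : ∅^φ [R!] (∅, B!) (¬(∅^(φ-1)))  ::  B, →
  else if c = C3.Red ∧ v 0 = {C3.Red} ∧ (v 1 = ∅ ∨ v 1 = {C3.Blue}) ∧
      ¬ (∀ k : ℤ, 2 ≤ k → k ≤ (φ : ℤ) → v k = ∅) then (C3.Blue, 1)
  -- R2b : ∅^φ [R!] (W) (?^(φ-1))  ::  B, →
  else if c = C3.Red ∧ v 0 = {C3.Red} ∧ C3.White ∈ v 1 ∧
      (∀ k : ℤ, 2 ≤ k → k ≤ (φ : ℤ) → v k ≠ ∅) then (C3.Blue, 1)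
  -- R3a : ∅^φ [B!] (∅, R!) (¬(∅^(φ-1)))  ::  R, →
  else if c = C3.Blue ∧ v 0 = {C3.Blue} ∧ (v 1 = ∅ ∨ v 1 = {C3.Red}) ∧
      ¬ (∀ k : ℤ, 2 ≤ k → k ≤ (φ : ℤ) → v k = ∅) then (C3.Red, 1)
  -- R3b : ∅^φ [B!] (W) (?^(φ-1))  ::  R, →
  else if c = C3.Blue ∧ v 0 = {C3.Blue} ∧ C3.White ∈ v 1 ∧
      (∀ k : ℤ, 2 ≤ k → k ≤ (φ : ℤ) → v k ≠ ∅) then (C3.Red, 1)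
  -- R4a : ∅^φ [R [W]] (¬∅^φ)  ::  R
  else if c = C3.White ∧ C3.Red ∈ v 0 then (C3.Red, 0)
  -- R4b : ∅^φ [B [W]] (¬∅^φ)  ::  B
  else if c = C3.White ∧ C3.Blue ∈ v 0 then (C3.Blue, 0)
  -- R5 : ∅^φ [R!] (B!) (∅^(φ-1))  ::  B, →
  else if c = C3.Red ∧ v 0 = {C3.Red} ∧ v 1 = {C3.Blue} ∧
      (∀ k : ℤ, 2 ≤ k → k ≤ (φ : ℤ) → v k = ∅) then (C3.Blue, 1)
  else (c, 0)

open Classical in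
/-- Algorithm 1: the rules are applied in the orientation in which the `φ`
nearest nodes on one side are all empty.  A robot seeing no other robot does
nothing (rule R0), and no rule is enabled for a non-border robot. -/
noncomputable def algo1 (φ : ℕ) : Algo C3 where
  out := fun c v =>
    if (∀ k : ℤ, 1 ≤ k → k ≤ (φ : ℤ) → v (-k) = ∅) ∧
       (∀ k : ℤ, 1 ≤ k → k ≤ (φ : ℤ) → v k = ∅) then (c, 0)
    else if ∀ k : ℤ, 1 ≤ k → k ≤ (φ : ℤ) → v (-k) = ∅ then algo1Rules φ c v
    else if ∀ k : ℤ, 1 ≤ k → k ≤ (φ : ℤ) → v k = ∅ then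
      ((algo1Rules φ c (fun k => v (-k))).1, -(algo1Rules φ c (fun k => v (-k))).2)
    else (c, 0)

/-! ### Algorithm 2 (four colors) -/

/-- The four light colors of Algorithm 2. -/
inductive C4 : Type
  | White
  | Red
  | Blue
  | Purple
deriving DecidableEq

open Classical in
/-- The rules of Algorithm 2, for a view oriented so that the `φ` nodes at
negative offsets are empty, in priority order
R1, R2a-1, R2a-2, R2b, R3a-1, R3a-2, R3b, R4a, R4b, R5a, R5b-1, R5b-2, R5b-3. -/
noncomputable def algo2Rules (φ : ℕ) (c : C4) (v : ℤ → Set C4) : C4 × SignType :=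
  -- R1 : ∅^φ [W!] (¬∅^φ)  ::  R
  if c = C4.White ∧ v 0 = {C4.White} then (C4.Red, 0)
  -- R2a-1 : ∅^φ [R!] (∅) (¬(∅^(φ-1)))  ::  →
  else if c = C4.Red ∧ v 0 = {C4.Red} ∧ v 1 = ∅ ∧
      ¬ (∀ k : ℤ, 2 ≤ k → k ≤ (φ : ℤ) → v k = ∅) then (C4.Red, 1)
  -- R2a-2 : ∅^φ [R!] (¬W, R) (¬(∅^(φ-1)))  ::  →
  else if c = C4.Red ∧ v 0 = {C4.Red} ∧ (C4.Red ∈ v 1 ∧ C4.White ∉ v 1) ∧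
      ¬ (∀ k : ℤ, 2 ≤ k → k ≤ (φ : ℤ) → v k = ∅) then (C4.Red, 1)
  -- R2b : ∅^φ [R!] (W) (?^(φ-1))  ::  B, →
  else if c = C4.Red ∧ v 0 = {C4.Red} ∧ C4.White ∈ v 1 ∧
      (∀ k : ℤ, 2 ≤ k → k ≤ (φ : ℤ) → v k ≠ ∅) then (C4.Blue, 1)
  -- R3a-1 : ∅^φ [B!] (∅) (¬(∅^(φ-1)))  ::  →
  else if c = C4.Blue ∧ v 0 = {C4.Blue} ∧ v 1 = ∅ ∧
      ¬ (∀ k : ℤ, 2 ≤ k → k ≤ (φ : ℤ) → v k = ∅) then (C4.Blue, 1)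
  -- R3a-2 : ∅^φ [B!] (¬W, B) (¬(∅^(φ-1)))  ::  →
  else if c = C4.Blue ∧ v 0 = {C4.Blue} ∧ (C4.Blue ∈ v 1 ∧ C4.White ∉ v 1) ∧
      ¬ (∀ k : ℤ, 2 ≤ k → k ≤ (φ : ℤ) → v k = ∅) then (C4.Blue, 1)
  -- R3b : ∅^φ [B!] (W) (?^(φ-1))  ::  R, →
  else if c = C4.Blue ∧ v 0 = {C4.Blue} ∧ C4.White ∈ v 1 ∧
      (∀ k : ℤ, 2 ≤ k → k ≤ (φ : ℤ) → v k ≠ ∅) then (C4.Red, 1)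
  -- R4a : ∅^φ [R [W]] (¬∅^φ)  ::  R
  else if c = C4.White ∧ C4.Red ∈ v 0 then (C4.Red, 0)
  -- R4b : ∅^φ [B [W]] (¬∅^φ)  ::  B
  else if c = C4.White ∧ C4.Blue ∈ v 0 then (C4.Blue, 0)
  -- R5a : ∅^φ [?] (P) (∅^(φ-1))  ::  →
  else if C4.Purple ∈ v 1 ∧ (∀ k : ℤ, 2 ≤ k → k ≤ (φ : ℤ) → v k = ∅) then (c, 1)
  -- R5b-1 : ∅^φ [B!] (R!) (∅^(φ-1))  ::  P
  else if c = C4.Blue ∧ v 0 = {C4.Blue} ∧ v 1 = {C4.Red} ∧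
      (∀ k : ℤ, 2 ≤ k → k ≤ (φ : ℤ) → v k = ∅) then (C4.Purple, 0)
  -- R5b-2 : ∅^φ [B!] (R, B) (∅^(φ-1))  ::  P
  else if c = C4.Blue ∧ v 0 = {C4.Blue} ∧ (C4.Red ∈ v 1 ∧ C4.Blue ∈ v 1) ∧
      (∀ k : ℤ, 2 ≤ k → k ≤ (φ : ℤ) → v k = ∅) then (C4.Purple, 0)
  -- R5b-3 : ∅^φ [R [B]] (R!) (∅^(φ-1))  ::  P
  else if c = C4.Blue ∧ C4.Red ∈ v 0 ∧ v 1 = {C4.Red} ∧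
      (∀ k : ℤ, 2 ≤ k → k ≤ (φ : ℤ) → v k = ∅) then (C4.Purple, 0)
  else (c, 0)

open Classical in
/-- Algorithm 2: the rules are applied in the orientation in which the `φ`
nearest nodes on one side are all empty.  A robot seeing no other robot does
nothing (rule R0), and no rule is enabled for a non-border robot. -/
noncomputable def algo2 (φ : ℕ) : Algo C4 where
  out := fun c v =>
    if (∀ k : ℤ, 1 ≤ k → k ≤ (φ : ℤ) → v (-k) = ∅) ∧
       (∀ k : ℤ, 1 ≤ k → k ≤ (φ : ℤ) → v k = ∅) then (c, 0)
    else if ∀ k : ℤ, 1 ≤ k → k ≤ (φ : ℤ) → v (-k) = ∅ then algo2Rules φ c v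
    else if ∀ k : ℤ, 1 ≤ k → k ≤ (φ : ℤ) → v k = ∅ then
      ((algo2Rules φ c (fun k => v (-k))).1, -(algo2Rules φ c (fun k => v (-k))).2)
    else (c, 0)

/-- `#O_W`: the number of nodes hosting a White robot that are not border
nodes. -/
noncomputable def numWhiteNonBorder {N R : ℕ} (φ : ℕ) (cfg : Config N R C4) : ℕ :=
  {u : ZMod N | C4.White ∈ colorsAt cfg u ∧ ¬ isBorderNode φ cfg u}.ncard

end Gathering

namespace Gathering

/-- Configuration `Conf BW-MR` (with `D = 1`): one border node `u` contains
Blue robots and possibly White robots, all without outdated views; the other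
border node `v` contains Red robots and possibly Blue robots, where a robot of
`v` either has no outdated view (and is then Red) or has a pending plan to
change its color to Blue and move to `u`. -/
def ConfBWMR {N R φ : ℕ} {A : Algo C3} (e : AsyncExec N R C3 φ A) (t : ℕ) : Prop :=
  ∃ u v : ZMod N, (v = u + 1 ∨ v = u - 1) ∧
    isBorderNode φ (e.cfg t) u ∧ isBorderNode φ (e.cfg t) v ∧
    (∀ w, occupiedNode (e.cfg t) w → w = u ∨ w = v) ∧
    (∀ r, (e.cfg t).pos r = u →
      ((e.cfg t).light r = C3.Blue ∨ (e.cfg t).light r = C3.White) ∧ e.plan t r = none) ∧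
    C3.Blue ∈ colorsAt (e.cfg t) u ∧
    (∀ r, (e.cfg t).pos r = v →
      ((e.cfg t).light r = C3.Red ∨ (e.cfg t).light r = C3.Blue) ∧
      (e.plan t r = none ∨ e.plan t r = some (C3.Blue, u)) ∧
      (e.plan t r = none → (e.cfg t).light r = C3.Red)) ∧
    C3.Red ∈ colorsAt (e.cfg t) v

/-- Configuration `Conf RW-MB` (with `D = 1`): one border node `u` contains
Red robots and possibly White robots, all without outdated views; the other
border node `v` contains Blue robots and possibly Red robots, where a robot of
`v` either has no outdated view (and is then Blue) or has a pending plan to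
change its color to Red and move to `u`. -/
def ConfRWMB {N R φ : ℕ} {A : Algo C3} (e : AsyncExec N R C3 φ A) (t : ℕ) : Prop :=
  ∃ u v : ZMod N, (v = u + 1 ∨ v = u - 1) ∧
    isBorderNode φ (e.cfg t) u ∧ isBorderNode φ (e.cfg t) v ∧
    (∀ w, occupiedNode (e.cfg t) w → w = u ∨ w = v) ∧
    (∀ r, (e.cfg t).pos r = u →
      ((e.cfg t).light r = C3.Red ∨ (e.cfg t).light r = C3.White) ∧ e.plan t r = none) ∧
    C3.Red ∈ colorsAt (e.cfg t) u ∧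
    (∀ r, (e.cfg t).pos r = v →
      ((e.cfg t).light r = C3.Red ∨ (e.cfg t).light r = C3.Blue) ∧
      (e.plan t r = none ∨ e.plan t r = some (C3.Red, u)) ∧
      (e.plan t r = none → (e.cfg t).light r = C3.Blue)) ∧
    C3.Blue ∈ colorsAt (e.cfg t) v

end Gathering


namespace Gathering

lemma int_no_dvd {N : ℕ} (hN : 3 ≤ N) {m : ℤ} (hdvd : (N:ℤ) ∣ m) (h1 : 1 ≤ m)
    (h2 : m ≤ (N:ℤ) - 1) : False := by
  obtain ⟨q, rfl⟩ := hdvd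
  rcases le_or_gt q 0 with hq | hq
  · have : (N:ℤ) * q ≤ 0 := mul_nonpos_of_nonneg_of_nonpos (by positivity) hq
    omega
  · have : (N:ℤ) * 1 ≤ (N:ℤ) * q := by
      apply mul_le_mul_of_nonneg_left (by omega) (by positivity)
    omega

lemma cast_ne_zero' {N : ℕ} (hN : 3 ≤ N) {k : ℤ} (h1 : 1 ≤ k) (h2 : k ≤ (N:ℤ) - 1) :
    ((k : ℤ) : ZMod N) ≠ 0 := by
  intro h
  rw [ZMod.intCast_zmod_eq_zero_iff_dvd] at h
  exact int_no_dvd hN h h1 h2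

lemma cast_eq_one_iff {N : ℕ} (hN : 3 ≤ N) {k : ℤ} (h1 : 1 ≤ k) (h2 : k ≤ (N:ℤ) - 2) :
    (((k : ℤ) : ZMod N) = 1) ↔ k = 1 := by
  constructor
  · intro h
    by_contra hk
    have hd : ((k - 1 : ℤ) : ZMod N) = 0 := by push_cast; rw [h]; ring
    rw [ZMod.intCast_zmod_eq_zero_iff_dvd] at hd
    exact int_no_dvd hN hd (by omega) (by omega)
  · rintro rfl; norm_num

lemma cast_ne_neg_one {N : ℕ} (hN : 3 ≤ N) {k : ℤ} (h1 : 1 ≤ k) (h2 : k ≤ (N:ℤ) - 2) :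
    (((k : ℤ) : ZMod N) ≠ -1) := by
  intro h
  have hd : ((k + 1 : ℤ) : ZMod N) = 0 := by push_cast; rw [h]; ring
  rw [ZMod.intCast_zmod_eq_zero_iff_dvd] at hd
  exact int_no_dvd hN hd (by omega) (by omega)

lemma one_ne_zero' {N : ℕ} (hN : 3 ≤ N) : (1 : ZMod N) ≠ 0 := by
  have := cast_ne_zero' hN (k := 1) le_rfl (by omega)
  simpa using this

open Classical in
/-- Simplified decision table of Algorithm 1 for `D = 1` border robots.
The boolean records whether the robot moves to the other border node. -/
noncomputable def ruleOut (φ : ℕ) (c : C3) (S T : Set C3) : C3 × Bool :=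
  if c = C3.White ∧ S = {C3.White} then (C3.Red, false)
  else if c = C3.Red ∧ S = {C3.Red} ∧ C3.White ∈ T ∧ φ = 1 then (C3.Blue, true)
  else if c = C3.Blue ∧ S = {C3.Blue} ∧ C3.White ∈ T ∧ φ = 1 then (C3.Red, true)
  else if c = C3.White ∧ C3.Red ∈ S then (C3.Red, false)
  else if c = C3.White ∧ C3.Blue ∈ S then (C3.Blue, false)
  else if c = C3.Red ∧ S = {C3.Red} ∧ T = {C3.Blue} then (C3.Blue, true)
  else (c, false)

lemma rules_eq {φ : ℕ} (hφ : 1 ≤ φ) (c : C3) (w : ℤ → Set C3)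
    (hfar : ∀ k : ℤ, 2 ≤ k → k ≤ (φ:ℤ) → w k = ∅) :
    algo1Rules φ c w =
      ((ruleOut φ c (w 0) (w 1)).1,
        if (ruleOut φ c (w 0) (w 1)).2 then 1 else 0) := by
  have hNE : (∀ k : ℤ, 2 ≤ k → k ≤ (φ:ℤ) → w k ≠ ∅) ↔ φ = 1 := by
    constructor
    · intro h
      by_contra hne
      have h2 : (2:ℤ) ≤ (φ:ℤ) := by exact_mod_cast by omega
      exact h 2 le_rfl h2 (hfar 2 le_rfl h2)
    · rintro rfl k hk hk'
      exact absurd hk' (by omega)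
  have hR2a : ¬ (c = C3.Red ∧ w 0 = {C3.Red} ∧ (w 1 = ∅ ∨ w 1 = {C3.Blue}) ∧
      ¬ (∀ k : ℤ, 2 ≤ k → k ≤ (φ:ℤ) → w k = ∅)) := by
    rintro ⟨-, -, -, h⟩; exact h hfar
  have hR3a : ¬ (c = C3.Blue ∧ w 0 = {C3.Blue} ∧ (w 1 = ∅ ∨ w 1 = {C3.Red}) ∧
      ¬ (∀ k : ℤ, 2 ≤ k → k ≤ (φ:ℤ) → w k = ∅)) := by
    rintro ⟨-, -, -, h⟩; exact h hfar
  unfold algo1Rules ruleOut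
  by_cases h1 : c = C3.White ∧ w 0 = {C3.White}
  · rw [if_pos h1, if_pos h1]; rfl
  · rw [if_neg h1, if_neg h1, if_neg hR2a]
    by_cases h2 : c = C3.Red ∧ w 0 = {C3.Red} ∧ C3.White ∈ w 1 ∧ φ = 1
    · rw [if_pos ⟨h2.1, h2.2.1, h2.2.2.1, hNE.mpr h2.2.2.2⟩, if_pos h2]; rfl
    · have h2' : ¬ (c = C3.Red ∧ w 0 = {C3.Red} ∧ C3.White ∈ w 1 ∧
          (∀ k : ℤ, 2 ≤ k → k ≤ (φ:ℤ) → w k ≠ ∅)) :=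
        fun h => h2 ⟨h.1, h.2.1, h.2.2.1, hNE.mp h.2.2.2⟩
      rw [if_neg h2', if_neg h2, if_neg hR3a]
      by_cases h3 : c = C3.Blue ∧ w 0 = {C3.Blue} ∧ C3.White ∈ w 1 ∧ φ = 1
      · rw [if_pos ⟨h3.1, h3.2.1, h3.2.2.1, hNE.mpr h3.2.2.2⟩, if_pos h3]; rfl
      · have h3' : ¬ (c = C3.Blue ∧ w 0 = {C3.Blue} ∧ C3.White ∈ w 1 ∧
            (∀ k : ℤ, 2 ≤ k → k ≤ (φ:ℤ) → w k ≠ ∅)) :=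
          fun h => h3 ⟨h.1, h.2.1, h.2.2.1, hNE.mp h.2.2.2⟩
        rw [if_neg h3', if_neg h3]
        by_cases h4 : c = C3.White ∧ C3.Red ∈ w 0
        · rw [if_pos h4, if_pos h4]; rfl
        · rw [if_neg h4, if_neg h4]
          by_cases h5 : c = C3.White ∧ C3.Blue ∈ w 0
          · rw [if_pos h5, if_pos h5]; rfl
          · rw [if_neg h5, if_neg h5]
            by_cases h6 : c = C3.Red ∧ w 0 = {C3.Red} ∧ w 1 = {C3.Blue}
            · rw [if_pos ⟨h6.1, h6.2.1, h6.2.2, hfar⟩, if_pos h6]; rfl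
            · have h6' : ¬ (c = C3.Red ∧ w 0 = {C3.Red} ∧ w 1 = {C3.Blue} ∧
                  (∀ k : ℤ, 2 ≤ k → k ≤ (φ:ℤ) → w k = ∅)) :=
                fun h => h6 ⟨h.1, h.2.1, h.2.2.1⟩
              rw [if_neg h6', if_neg h6]; rfl

end Gathering


namespace Gathering

lemma colorsAt_empty_of_unocc {N R : ℕ} {cfg : Config N R C3} {z : ZMod N}
    (h : ¬ occupiedNode cfg z) : colorsAt cfg z = ∅ := by
  ext c
  simp only [colorsAt, Set.mem_setOf_eq, Set.mem_empty_iff_false, iff_false]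
  rintro ⟨r, hr, -⟩
  exact h ⟨r, hr⟩

lemma colorsAt_ne_empty_of_occ {N R : ℕ} {cfg : Config N R C3} {z : ZMod N}
    (h : occupiedNode cfg z) : colorsAt cfg z ≠ ∅ := by
  obtain ⟨r, hr⟩ := h
  intro heq
  have : cfg.light r ∈ colorsAt cfg z := ⟨r, hr, rfl⟩
  rw [heq] at this
  exact this

lemma mem_colorsAt_iff {N R : ℕ} {cfg : Config N R C3} {z : ZMod N} {c : C3} :
    c ∈ colorsAt cfg z ↔ ∃ r, cfg.pos r = z ∧ cfg.light r = c := Iff.rfl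

lemma ruleOut_white {φ : ℕ} {S T : Set C3} (hW : C3.White ∈ S) (hB : C3.Blue ∉ S) :
    ruleOut φ C3.White S T = (C3.Red, false) := by
  have hR : S = {C3.White} ∨ C3.Red ∈ S := by
    by_cases h1 : S = {C3.White}
    · exact Or.inl h1
    · right
      by_contra hR
      apply h1
      apply subset_antisymm
      · intro c hc
        cases c with
        | White => rfl
        | Red => exact absurd hc hR
        | Blue => exact absurd hc hB
      · exact Set.singleton_subset_iff.mpr hW
  unfold ruleOut
  rcases hR with h | h
  · rw [if_pos ⟨rfl, h⟩]
  · by_cases h1 : C3.White = C3.White ∧ S = {C3.White}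
    · rw [if_pos h1]
    · rw [if_neg h1, if_neg (by rintro ⟨h', -⟩; exact C3.noConfusion h'),
        if_neg (by rintro ⟨h', -⟩; exact C3.noConfusion h'), if_pos ⟨rfl, h⟩]

open Classical in
lemma ruleOut_red {φ : ℕ} {S T : Set C3} (hT : C3.White ∉ T) :
    ruleOut φ C3.Red S T =
      (if S = {C3.Red} ∧ T = {C3.Blue} then (C3.Blue, true) else (C3.Red, false)) := by
  unfold ruleOut
  rw [if_neg (by rintro ⟨h', -⟩; exact C3.noConfusion h'),
    if_neg (by rintro ⟨-, -, h', -⟩; exact hT h'),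
    if_neg (by rintro ⟨h', -⟩; exact C3.noConfusion h'),
    if_neg (by rintro ⟨h', -⟩; exact C3.noConfusion h'),
    if_neg (by rintro ⟨h', -⟩; exact C3.noConfusion h')]
  by_cases h : S = {C3.Red} ∧ T = {C3.Blue}
  · rw [if_pos ⟨rfl, h.1, h.2⟩, if_pos h]
  · rw [if_neg (by rintro ⟨-, h1, h2⟩; exact h ⟨h1, h2⟩), if_neg h]

open Classical in
lemma ruleOut_blue {φ : ℕ} {S T : Set C3} :
    ruleOut φ C3.Blue S T =
      (if S = {C3.Blue} ∧ C3.White ∈ T ∧ φ = 1 then (C3.Red, true)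
        else (C3.Blue, false)) := by
  unfold ruleOut
  rw [if_neg (by rintro ⟨h', -⟩; exact C3.noConfusion h'),
    if_neg (by rintro ⟨h', -⟩; exact C3.noConfusion h')]
  by_cases h : S = {C3.Blue} ∧ C3.White ∈ T ∧ φ = 1
  · rw [if_pos ⟨rfl, h.1, h.2.1, h.2.2⟩, if_pos h]
  · rw [if_neg (by rintro ⟨-, h1, h2, h3⟩; exact h ⟨h1, h2, h3⟩), if_neg h,
      if_neg (by rintro ⟨h', -⟩; exact C3.noConfusion h'),
      if_neg (by rintro ⟨h', -⟩; exact C3.noConfusion h'),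
      if_neg (by rintro ⟨h', -⟩; exact C3.noConfusion h')]

open Classical in
lemma out_fwd {φ : ℕ} (hφ : 1 ≤ φ) (c : C3) (w : ℤ → Set C3)
    (hneg : ∀ k : ℤ, 1 ≤ k → k ≤ (φ:ℤ) → w (-k) = ∅)
    (h1 : w 1 ≠ ∅)
    (hfar : ∀ k : ℤ, 2 ≤ k → k ≤ (φ:ℤ) → w k = ∅) :
    (algo1 φ).out c w = ((ruleOut φ c (w 0) (w 1)).1,
        if (ruleOut φ c (w 0) (w 1)).2 then 1 else 0) := by
  have hpos : ¬ (∀ k : ℤ, 1 ≤ k → k ≤ (φ:ℤ) → w k = ∅) := by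
    intro h; exact h1 (h 1 le_rfl (by exact_mod_cast hφ))
  show (if _ then _ else if _ then _ else if _ then _ else _) = _
  rw [if_neg (fun h => hpos h.2), if_pos hneg]
  exact rules_eq hφ c w hfar

open Classical in
lemma out_bwd {φ : ℕ} (hφ : 1 ≤ φ) (c : C3) (w : ℤ → Set C3)
    (hpos : ∀ k : ℤ, 1 ≤ k → k ≤ (φ:ℤ) → w k = ∅)
    (h1 : w (-1) ≠ ∅)
    (hfar : ∀ k : ℤ, 2 ≤ k → k ≤ (φ:ℤ) → w (-k) = ∅) :
    (algo1 φ).out c w = ((ruleOut φ c (w 0) (w (-1))).1,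
        if (ruleOut φ c (w 0) (w (-1))).2 then -1 else 0) := by
  have hneg : ¬ (∀ k : ℤ, 1 ≤ k → k ≤ (φ:ℤ) → w (-k) = ∅) := by
    intro h; exact h1 (h 1 le_rfl (by exact_mod_cast hφ))
  show (if _ then _ else if _ then _ else if _ then _ else _) = _
  rw [if_neg (fun h => hneg h.1), if_neg hneg, if_pos hpos]
  have hre := rules_eq hφ c (fun k => w (-k)) (fun k hk hk' => hfar k hk hk')
  rw [hre]
  have e0 : (fun k => w (-k)) 0 = w 0 := by norm_num
  have e1 : (fun k => w (-k)) 1 = w (-1) := rfl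
  rw [show (-0:ℤ) = 0 from neg_zero]
  cases hb : (ruleOut φ c (w 0) (w (-1))).2 <;> simp [hb]

open Classical in
lemma out_none {φ : ℕ} (c : C3) (w : ℤ → Set C3)
    (hneg : ∀ k : ℤ, 1 ≤ k → k ≤ (φ:ℤ) → w (-k) = ∅)
    (hpos : ∀ k : ℤ, 1 ≤ k → k ≤ (φ:ℤ) → w k = ∅) :
    (algo1 φ).out c w = (c, 0) := by
  show (if _ then _ else if _ then _ else if _ then _ else _) = _
  rw [if_pos ⟨hneg, hpos⟩]

end Gathering


namespace Gathering

open Classical in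
/-- Master lemma: outcome of a Look by a robot on border node `x`, with the
other occupied node possibly being the adjacent node `y`. -/
lemma look_eval {N R phi : ℕ} (hN : 3 ≤ N) (hphi : 1 ≤ phi)
    (hphiN : (phi:ℤ) ≤ (N:ℤ) - 2)
    (cfg : Config N R C3) (x y : ZMod N) (hadj : y = x + 1 ∨ y = x - 1)
    (Hpos : ∀ z, occupiedNode cfg z → z = x ∨ z = y)
    (c : C3) (dir : Bool) :
    (((algo1 phi).out c (nodeView phi cfg x dir)).1,
      moveTarget x dir ((algo1 phi).out c (nodeView phi cfg x dir)).2) =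
    if occupiedNode cfg y then
      ((ruleOut phi c (colorsAt cfg x) (colorsAt cfg y)).1,
        if (ruleOut phi c (colorsAt cfg x) (colorsAt cfg y)).2 then y else x)
    else (c, x) := by
  have hphiZ : (1:ℤ) ≤ (phi:ℤ) := by exact_mod_cast hphi
  have hempty : ∀ z : ZMod N, z ≠ x → z ≠ y → colorsAt cfg z = ∅ := by
    intro z hzx hzy
    apply colorsAt_empty_of_unocc
    intro hocc
    rcases Hpos z hocc with h | h
    exacts [hzx h, hzy h]
  have hb1 : ∀ k : ℤ, 1 ≤ k → k ≤ (phi:ℤ) → ((k : ZMod N) ≠ 0) := fun k h1 h2 =>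
    cast_ne_zero' hN h1 (by omega)
  have hb2 : ∀ k : ℤ, 1 ≤ k → k ≤ (phi:ℤ) → (((k : ZMod N) = 1) ↔ k = 1) := fun k h1 h2 =>
    cast_eq_one_iff hN h1 (by omega)
  have hb3 : ∀ k : ℤ, 1 ≤ k → k ≤ (phi:ℤ) → ((k : ZMod N) ≠ -1) := fun k h1 h2 =>
    cast_ne_neg_one hN h1 (by omega)
  have hview : ∀ (d : Bool) (k : ℤ), |k| ≤ (phi:ℤ) →
      nodeView phi cfg x d k =
        colorsAt cfg (x + (if d then ((k:ℤ) : ZMod N) else ((-k : ℤ) : ZMod N))) := by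
    intro d k hk
    simp only [nodeView, if_pos hk]
  have habs : ∀ k : ℤ, 0 ≤ k → k ≤ (phi:ℤ) → |k| ≤ (phi:ℤ) := by
    intro k h1 h2; rw [abs_of_nonneg (by omega)]; exact h2
  have habs' : ∀ k : ℤ, 0 ≤ k → k ≤ (phi:ℤ) → |(-k)| ≤ (phi:ℤ) := by
    intro k h1 h2; rw [abs_neg, abs_of_nonneg (by omega)]; exact h2
  have habs0 : |(0:ℤ)| ≤ (phi:ℤ) := by rw [abs_zero]; positivity
  have habs1 : |(1:ℤ)| ≤ (phi:ℤ) := by rw [abs_one]; exact hphiZ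
  have habs1' : |(-1:ℤ)| ≤ (phi:ℤ) := by rw [abs_neg, abs_one]; exact hphiZ
  have hpx : ∀ k:ℤ, 1 ≤ k → k ≤ (phi:ℤ) → x + ((k:ℤ):ZMod N) ≠ x := by
    intro k h1 h2 h
    rw [add_eq_left] at h
    exact hb1 k h1 h2 h
  have hnx : ∀ k:ℤ, 1 ≤ k → k ≤ (phi:ℤ) → x + ((-k:ℤ):ZMod N) ≠ x := by
    intro k h1 h2 h
    rw [add_eq_left] at h
    push_cast at h
    exact hb1 k h1 h2 (neg_eq_zero.mp h)
  have e0 : ∀ d : Bool, nodeView phi cfg x d 0 = colorsAt cfg x := by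
    intro d
    rw [hview d 0 habs0]
    cases d <;> norm_num
  rcases hadj with hy | hy
  · -- y = x + 1
    have hxy : ∀ k:ℤ, 1 ≤ k → k ≤ (phi:ℤ) → (x + ((k:ℤ):ZMod N) = y ↔ k = 1) := by
      intro k h1 h2
      rw [hy, add_right_inj]
      exact hb2 k h1 h2
    have hxny : ∀ k:ℤ, 1 ≤ k → k ≤ (phi:ℤ) → x + ((-k:ℤ):ZMod N) ≠ y := by
      intro k h1 h2 h
      rw [hy, add_right_inj] at h
      push_cast at h
      rw [neg_eq_iff_eq_neg] at h
      exact hb3 k h1 h2 h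
    have hnegSide : ∀ k:ℤ, 1 ≤ k → k ≤ (phi:ℤ) →
        colorsAt cfg (x + ((-k:ℤ):ZMod N)) = ∅ :=
      fun k h1 h2 => hempty _ (hnx k h1 h2) (hxny k h1 h2)
    have hposFar : ∀ k:ℤ, 2 ≤ k → k ≤ (phi:ℤ) →
        colorsAt cfg (x + ((k:ℤ):ZMod N)) = ∅ := by
      intro k h1 h2
      apply hempty _ (hpx k (by omega) h2)
      intro h
      have := (hxy k (by omega) h2).mp h
      omega
    have h1y : x + ((1:ℤ):ZMod N) = y := by rw [hy]; norm_num
    by_cases hocc : occupiedNode cfg y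
    · rw [if_pos hocc]
      have hyne : colorsAt cfg y ≠ ∅ := colorsAt_ne_empty_of_occ hocc
      cases dir
      · -- dir = false : mirrored view
        have ef : ∀ k:ℤ, |k| ≤ (phi:ℤ) →
            nodeView phi cfg x false k = colorsAt cfg (x + ((-k:ℤ):ZMod N)) := by
          intro k hk; rw [hview false k hk]; norm_num
        have e1 : nodeView phi cfg x false (-1) = colorsAt cfg y := by
          rw [ef (-1) habs1']
          have hn : ((-(-1):ℤ)) = (1:ℤ) := by norm_num
          rw [hn, h1y]
        rw [out_bwd hphi c _
          (fun k h1 h2 => by rw [ef k (habs k (by omega) h2)]; exact hnegSide k h1 h2)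
          (by rw [e1]; exact hyne)
          (fun k h1 h2 => by
            rw [ef (-k) (habs' k (by omega) h2), neg_neg]
            exact hposFar k h1 h2),
          e0, e1]
        cases hbb : (ruleOut phi c (colorsAt cfg x) (colorsAt cfg y)).2
        · simp [hbb, moveTarget]
        · simp only [hbb, if_true]
          have : moveTarget x false (-1) = y := by
            simp [moveTarget]
            rw [← h1y]; norm_num
          rw [this]
      · -- dir = true
        have ef : ∀ k:ℤ, |k| ≤ (phi:ℤ) →
            nodeView phi cfg x true k = colorsAt cfg (x + ((k:ℤ):ZMod N)) := by
          intro k hk; rw [hview true k hk]; norm_num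
        have e1 : nodeView phi cfg x true 1 = colorsAt cfg y := by
          rw [ef 1 habs1]; rw [h1y]
        rw [out_fwd hphi c _
          (fun k h1 h2 => by rw [ef (-k) (habs' k (by omega) h2)]; exact hnegSide k h1 h2)
          (by rw [e1]; exact hyne)
          (fun k h1 h2 => by rw [ef k (habs k (by omega) h2)]; exact hposFar k h1 h2),
          e0, e1]
        cases hbb : (ruleOut phi c (colorsAt cfg x) (colorsAt cfg y)).2
        · simp [hbb, moveTarget]
        · simp only [hbb, if_true]
          have : moveTarget x true 1 = y := by
            simp [moveTarget]
            rw [← h1y]; norm_num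
          rw [this]
    · rw [if_neg hocc]
      have hposSide : ∀ k:ℤ, 1 ≤ k → k ≤ (phi:ℤ) →
          colorsAt cfg (x + ((k:ℤ):ZMod N)) = ∅ := by
        intro k h1 h2
        by_cases h : x + ((k:ℤ):ZMod N) = y
        · rw [h]; exact colorsAt_empty_of_unocc hocc
        · exact hempty _ (hpx k h1 h2) h
      cases dir
      · have ef : ∀ k:ℤ, |k| ≤ (phi:ℤ) →
            nodeView phi cfg x false k = colorsAt cfg (x + ((-k:ℤ):ZMod N)) := by
          intro k hk; rw [hview false k hk]; norm_num
        rw [out_none c _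
          (fun k h1 h2 => by
            rw [ef (-k) (habs' k (by omega) h2), neg_neg]
            exact hposSide k h1 h2)
          (fun k h1 h2 => by rw [ef k (habs k (by omega) h2)]; exact hnegSide k h1 h2)]
        simp [moveTarget]
      · have ef : ∀ k:ℤ, |k| ≤ (phi:ℤ) →
            nodeView phi cfg x true k = colorsAt cfg (x + ((k:ℤ):ZMod N)) := by
          intro k hk; rw [hview true k hk]; norm_num
        rw [out_none c _
          (fun k h1 h2 => by rw [ef (-k) (habs' k (by omega) h2)]; exact hnegSide k h1 h2)
          (fun k h1 h2 => by rw [ef k (habs k (by omega) h2)]; exact hposSide k h1 h2)]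
        simp [moveTarget]
  · -- y = x - 1
    have hy' : y = x + (-1 : ZMod N) := by rw [hy]; ring
    have hxy : ∀ k:ℤ, 1 ≤ k → k ≤ (phi:ℤ) → x + ((k:ℤ):ZMod N) ≠ y := by
      intro k h1 h2 h
      rw [hy', add_right_inj] at h
      exact hb3 k h1 h2 h
    have hxny : ∀ k:ℤ, 1 ≤ k → k ≤ (phi:ℤ) → (x + ((-k:ℤ):ZMod N) = y ↔ k = 1) := by
      intro k h1 h2
      rw [hy', add_right_inj]
      push_cast
      rw [neg_eq_iff_eq_neg, neg_neg]
      exact hb2 k h1 h2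
    have hposSide : ∀ k:ℤ, 1 ≤ k → k ≤ (phi:ℤ) →
        colorsAt cfg (x + ((k:ℤ):ZMod N)) = ∅ :=
      fun k h1 h2 => hempty _ (hpx k h1 h2) (hxy k h1 h2)
    have hnegFar : ∀ k:ℤ, 2 ≤ k → k ≤ (phi:ℤ) →
        colorsAt cfg (x + ((-k:ℤ):ZMod N)) = ∅ := by
      intro k h1 h2
      apply hempty _ (hnx k (by omega) h2)
      intro h
      have := (hxny k (by omega) h2).mp h
      omega
    have h1y : x + ((-1:ℤ):ZMod N) = y := by rw [hy']; norm_num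
    by_cases hocc : occupiedNode cfg y
    · rw [if_pos hocc]
      have hyne : colorsAt cfg y ≠ ∅ := colorsAt_ne_empty_of_occ hocc
      cases dir
      · -- dir = false : forward in the mirrored orientation
        have ef : ∀ k:ℤ, |k| ≤ (phi:ℤ) →
            nodeView phi cfg x false k = colorsAt cfg (x + ((-k:ℤ):ZMod N)) := by
          intro k hk; rw [hview false k hk]; norm_num
        have e1 : nodeView phi cfg x false 1 = colorsAt cfg y := by
          rw [ef 1 habs1]; rw [h1y]
        rw [out_fwd hphi c _
          (fun k h1 h2 => by
            rw [ef (-k) (habs' k (by omega) h2), neg_neg]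
            exact hposSide k h1 h2)
          (by rw [e1]; exact hyne)
          (fun k h1 h2 => by rw [ef k (habs k (by omega) h2)]; exact hnegFar k h1 h2),
          e0, e1]
        cases hbb : (ruleOut phi c (colorsAt cfg x) (colorsAt cfg y)).2
        · simp [hbb, moveTarget]
        · simp only [hbb, if_true]
          have : moveTarget x false 1 = y := by
            simp [moveTarget]
            rw [← h1y]; norm_num
          rw [this]
      · -- dir = true : mirrored
        have ef : ∀ k:ℤ, |k| ≤ (phi:ℤ) →
            nodeView phi cfg x true k = colorsAt cfg (x + ((k:ℤ):ZMod N)) := by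
          intro k hk; rw [hview true k hk]; norm_num
        have e1 : nodeView phi cfg x true (-1) = colorsAt cfg y := by
          rw [ef (-1) habs1']; rw [h1y]
        rw [out_bwd hphi c _
          (fun k h1 h2 => by rw [ef k (habs k (by omega) h2)]; exact hposSide k h1 h2)
          (by rw [e1]; exact hyne)
          (fun k h1 h2 => by
            rw [ef (-k) (habs' k (by omega) h2)]
            exact hnegFar k h1 h2),
          e0, e1]
        cases hbb : (ruleOut phi c (colorsAt cfg x) (colorsAt cfg y)).2
        · simp [hbb, moveTarget]
        · simp only [hbb, if_true]
          have : moveTarget x true (-1) = y := by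
            simp [moveTarget]
            rw [← h1y]; norm_num
          rw [this]
    · rw [if_neg hocc]
      have hnegSide : ∀ k:ℤ, 1 ≤ k → k ≤ (phi:ℤ) →
          colorsAt cfg (x + ((-k:ℤ):ZMod N)) = ∅ := by
        intro k h1 h2
        by_cases h : x + ((-k:ℤ):ZMod N) = y
        · rw [h]; exact colorsAt_empty_of_unocc hocc
        · exact hempty _ (hnx k h1 h2) h
      cases dir
      · have ef : ∀ k:ℤ, |k| ≤ (phi:ℤ) →
            nodeView phi cfg x false k = colorsAt cfg (x + ((-k:ℤ):ZMod N)) := by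
          intro k hk; rw [hview false k hk]; norm_num
        rw [out_none c _
          (fun k h1 h2 => by
            rw [ef (-k) (habs' k (by omega) h2), neg_neg]
            exact hposSide k h1 h2)
          (fun k h1 h2 => by rw [ef k (habs k (by omega) h2)]; exact hnegSide k h1 h2)]
        simp [moveTarget]
      · have ef : ∀ k:ℤ, |k| ≤ (phi:ℤ) →
            nodeView phi cfg x true k = colorsAt cfg (x + ((k:ℤ):ZMod N)) := by
          intro k hk; rw [hview true k hk]; norm_num
        rw [out_none c _
          (fun k h1 h2 => by rw [ef (-k) (habs' k (by omega) h2)]; exact hnegSide k h1 h2)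
          (fun k h1 h2 => by rw [ef k (habs k (by omega) h2)]; exact hposSide k h1 h2)]
        simp [moveTarget]

end Gathering


namespace Gathering

/-- Per-robot invariant states for the endgame from `Conf RW-MB`. -/
def allowed {N : ℕ} (u v : ZMod N) (p : ZMod N) (l : C3) (pl : Option (C3 × ZMod N)) : Prop :=
  (p = u ∧ ((l = C3.White ∧ (pl = none ∨ pl = some (C3.Red, u) ∨ pl = some (C3.White, u))) ∨
            (l = C3.Red ∧ (pl = none ∨ pl = some (C3.Red, u) ∨ pl = some (C3.Blue, v))) ∨
            (l = C3.Blue ∧ pl = some (C3.Blue, v)))) ∨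
  (p = v ∧ ((l = C3.Blue ∧ (pl = none ∨ pl = some (C3.Blue, v) ∨ pl = some (C3.Red, u))) ∨
            (l = C3.Red ∧ pl = some (C3.Red, u))))

/-- Global invariant: every robot is in an allowed state, and a pending `R5`
move excludes White robots on `u`. -/
def Inv {N R phi : ℕ} (e : AsyncExec N R C3 phi (algo1 phi)) (u v : ZMod N) (t : ℕ) : Prop :=
  (∀ r, allowed u v ((e.cfg t).pos r) ((e.cfg t).light r) (e.plan t r)) ∧
  ((∃ r, (e.cfg t).pos r = u ∧ e.plan t r = some (C3.Blue, v)) →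
    ∀ r, (e.cfg t).pos r = u → (e.cfg t).light r ≠ C3.White)

lemma allowed_white_plan {N : ℕ} {u v p w : ZMod N} {l : C3} {pl : Option (C3 × ZMod N)}
    (h : allowed u v p l pl) (hpl : pl = some (C3.White, w)) :
    p = u ∧ l = C3.White ∧ w = u := by
  subst hpl
  rcases h with ⟨hp, ⟨hl, h'⟩|⟨hl, h'⟩|⟨hl, h'⟩⟩|⟨hp, ⟨hl, h'⟩|⟨hl, h'⟩⟩ <;> simp_all

lemma allowed_red_plan {N : ℕ} {u v p w : ZMod N} {l : C3} {pl : Option (C3 × ZMod N)}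
    (h : allowed u v p l pl) (hpl : pl = some (C3.Red, w)) : w = u := by
  subst hpl
  rcases h with ⟨hp, ⟨hl, h'⟩|⟨hl, h'⟩|⟨hl, h'⟩⟩|⟨hp, ⟨hl, h'⟩|⟨hl, h'⟩⟩ <;> simp_all

lemma allowed_blue_plan {N : ℕ} {u v p w : ZMod N} {l : C3} {pl : Option (C3 × ZMod N)}
    (h : allowed u v p l pl) (hpl : pl = some (C3.Blue, w)) : w = v := by
  subst hpl
  rcases h with ⟨hp, ⟨hl, h'⟩|⟨hl, h'⟩|⟨hl, h'⟩⟩|⟨hp, ⟨hl, h'⟩|⟨hl, h'⟩⟩ <;> simp_all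

lemma allowed_blue_u {N : ℕ} {u v p : ZMod N} {l : C3} {pl : Option (C3 × ZMod N)}
    (h : allowed u v p l pl) (huv : u ≠ v) (hp : p = u) (hl : l = C3.Blue) :
    pl = some (C3.Blue, v) := by
  rcases h with ⟨hp', ⟨hl', h'⟩|⟨hl', h'⟩|⟨hl', h'⟩⟩|⟨hp', ⟨hl', h'⟩|⟨hl', h'⟩⟩ <;> simp_all

lemma adj_ne {N : ℕ} (hN : 3 ≤ N) {u v : ZMod N} (hadj : v = u + 1 ∨ v = u - 1) :
    u ≠ v := by
  have h1 : (1 : ZMod N) ≠ 0 := one_ne_zero' hN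
  rcases hadj with rfl | rfl
  · intro h
    apply h1
    have := (add_eq_left (a := u) (b := 1)).mp h.symm
    exact this
  · intro h
    apply h1
    have h' : u + (-1) = u := by rw [sub_eq_add_neg] at h; exact h.symm
    have := (add_eq_left (a := u) (b := -1)).mp h'
    exact neg_eq_zero.mp this

lemma inv_Hpos {N R phi : ℕ} {e : AsyncExec N R C3 phi (algo1 phi)} {u v : ZMod N} {t : ℕ}
    (hall : ∀ r, allowed u v ((e.cfg t).pos r) ((e.cfg t).light r) (e.plan t r)) :
    ∀ z, occupiedNode (e.cfg t) z → z = u ∨ z = v := by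
  rintro z ⟨r, hr⟩
  rcases hall r with ⟨hp, -⟩ | ⟨hp, -⟩
  · exact Or.inl (hr ▸ hp)
  · exact Or.inr (hr ▸ hp)

lemma inv_white_v {N R phi : ℕ} {e : AsyncExec N R C3 phi (algo1 phi)} {u v : ZMod N} {t : ℕ}
    (huv : u ≠ v)
    (hall : ∀ r, allowed u v ((e.cfg t).pos r) ((e.cfg t).light r) (e.plan t r)) :
    C3.White ∉ colorsAt (e.cfg t) v := by
  rintro ⟨r, hp, hl⟩
  rcases hall r with ⟨hp', hc⟩ | ⟨hp', ⟨hl', -⟩|⟨hl', -⟩⟩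
  · exact absurd (hp'.symm.trans hp) huv
  · rw [hl] at hl'; exact C3.noConfusion hl'
  · rw [hl] at hl'; exact C3.noConfusion hl'

/-- A robot that is White on `u` at time `t+1` was already White on `u` at `t`. -/
lemma white_back {N R phi : ℕ} {e : AsyncExec N R C3 phi (algo1 phi)} {u v : ZMod N} {t : ℕ}
    (hall : ∀ r, allowed u v ((e.cfg t).pos r) ((e.cfg t).light r) (e.plan t r))
    (r : Fin R) (hp : (e.cfg (t+1)).pos r = u) (hl : (e.cfg (t+1)).light r = C3.White) :
    (e.cfg t).pos r = u ∧ (e.cfg t).light r = C3.White := by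
  rcases e.step t r with ⟨h1, h2, h3⟩ | ⟨h0, h1, h2, dir, h3⟩ |
    ⟨c, w, hpl, h1, h2, h3⟩ | ⟨c, w, hpl, h1, h2, h3⟩
  · exact ⟨h1.symm.trans hp, h2.symm.trans hl⟩
  · exact ⟨h1.symm.trans hp, h2.symm.trans hl⟩
  · have hc : c = C3.White := h2.symm.trans hl
    subst hc
    have := allowed_white_plan (hall r) hpl
    exact ⟨this.1, this.2.1⟩
  · have hc : c = C3.White := h2.symm.trans hl
    subst hc
    have := allowed_white_plan (hall r) hpl
    exact ⟨this.1, this.2.1⟩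

end Gathering


namespace Gathering

lemma allowed_visible {N : ℕ} {u v p w : ZMod N} {l c : C3}
    (h : allowed u v p l (some (c, w))) : allowed u v p c (some (c, w)) := by
  rcases h with ⟨hp, ⟨hl, h'⟩|⟨hl, h'⟩|⟨hl, h'⟩⟩|⟨hp, ⟨hl, h'⟩|⟨hl, h'⟩⟩
  · rcases h' with h'|h'|h'
    · exact absurd h' (by simp)
    · have hc : c = C3.Red ∧ w = u := by simpa using h'
      obtain ⟨rfl, rfl⟩ := hc
      exact Or.inl ⟨hp, Or.inr (Or.inl ⟨rfl, Or.inr (Or.inl rfl)⟩)⟩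
    · have hc : c = C3.White ∧ w = u := by simpa using h'
      obtain ⟨rfl, rfl⟩ := hc
      exact Or.inl ⟨hp, Or.inl ⟨rfl, Or.inr (Or.inr rfl)⟩⟩
  · rcases h' with h'|h'|h'
    · exact absurd h' (by simp)
    · have hc : c = C3.Red ∧ w = u := by simpa using h'
      obtain ⟨rfl, rfl⟩ := hc
      exact Or.inl ⟨hp, Or.inr (Or.inl ⟨rfl, Or.inr (Or.inl rfl)⟩)⟩
    · have hc : c = C3.Blue ∧ w = v := by simpa using h'
      obtain ⟨rfl, rfl⟩ := hc
      exact Or.inl ⟨hp, Or.inr (Or.inr ⟨rfl, rfl⟩)⟩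
  · have hc : c = C3.Blue ∧ w = v := by simpa using h'
    obtain ⟨rfl, rfl⟩ := hc
    exact Or.inl ⟨hp, Or.inr (Or.inr ⟨rfl, rfl⟩)⟩
  · rcases h' with h'|h'|h'
    · exact absurd h' (by simp)
    · have hc : c = C3.Blue ∧ w = v := by simpa using h'
      obtain ⟨rfl, rfl⟩ := hc
      exact Or.inr ⟨hp, Or.inl ⟨rfl, Or.inr (Or.inl rfl)⟩⟩
    · have hc : c = C3.Red ∧ w = u := by simpa using h'
      obtain ⟨rfl, rfl⟩ := hc
      exact Or.inr ⟨hp, Or.inr ⟨rfl, rfl⟩⟩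
  · have hc : c = C3.Red ∧ w = u := by simpa using h'
    obtain ⟨rfl, rfl⟩ := hc
    exact Or.inr ⟨hp, Or.inr ⟨rfl, rfl⟩⟩

lemma allowed_move {N : ℕ} {u v p w : ZMod N} {l c : C3}
    (h : allowed u v p l (some (c, w))) : allowed u v w c none := by
  have h3 : (c = C3.Red ∧ w = u) ∨ (c = C3.White ∧ w = u) ∨ (c = C3.Blue ∧ w = v) := by
    rcases h with ⟨hp, ⟨hl, h'⟩|⟨hl, h'⟩|⟨hl, h'⟩⟩|⟨hp, ⟨hl, h'⟩|⟨hl, h'⟩⟩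
    · rcases h' with h'|h'|h'
      · exact absurd h' (by simp)
      · exact Or.inl (by simpa using h')
      · exact Or.inr (Or.inl (by simpa using h'))
    · rcases h' with h'|h'|h'
      · exact absurd h' (by simp)
      · exact Or.inl (by simpa using h')
      · exact Or.inr (Or.inr (by simpa using h'))
    · exact Or.inr (Or.inr (by simpa using h'))
    · rcases h' with h'|h'|h'
      · exact absurd h' (by simp)
      · exact Or.inr (Or.inr (by simpa using h'))
      · exact Or.inl (by simpa using h')
    · exact Or.inl (by simpa using h')
  rcases h3 with ⟨rfl, rfl⟩ | ⟨rfl, rfl⟩ | ⟨rfl, rfl⟩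
  · exact Or.inl ⟨rfl, Or.inr (Or.inl ⟨rfl, Or.inl rfl⟩)⟩
  · exact Or.inl ⟨rfl, Or.inl ⟨rfl, Or.inl rfl⟩⟩
  · exact Or.inr ⟨rfl, Or.inl ⟨rfl, Or.inl rfl⟩⟩

lemma inv_step {N R phi : ℕ} (hN : 3 ≤ N) (hphi : 1 ≤ phi) (hphiN : (phi:ℤ) ≤ (N:ℤ) - 2)
    {e : AsyncExec N R C3 phi (algo1 phi)} {u v : ZMod N}
    (hadj : v = u + 1 ∨ v = u - 1) {t : ℕ} (h : Inv e u v t) : Inv e u v (t+1) := by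
  obtain ⟨hall, hG⟩ := h
  have huv : u ≠ v := adj_ne hN hadj
  have Hpos := inv_Hpos hall
  have hadj' : u = v + 1 ∨ u = v - 1 := by
    rcases hadj with h' | h'
    · right; rw [h']; ring
    · left; rw [h']; ring
  have Hpos' : ∀ z, occupiedNode (e.cfg t) z → z = v ∨ z = u := fun z hz => (Hpos z hz).symm
  have hWv : C3.White ∉ colorsAt (e.cfg t) v := inv_white_v huv hall
  constructor
  · intro r
    rcases e.step t r with ⟨h1, h2, h3⟩ | ⟨h0, h1, h2, dir, h3⟩ |
      ⟨c, w, hpl, h1, h2, h3⟩ | ⟨c, w, hpl, h1, h2, h3⟩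
    · rw [h1, h2, h3]; exact hall r
    · rw [h1, h2]
      rcases hall r with ⟨hp, hcase⟩ | ⟨hp, hcase⟩
      · rw [hp] at h3
        rw [look_eval hN hphi hphiN (e.cfg t) u v hadj Hpos ((e.cfg t).light r) dir] at h3
        by_cases hocc : occupiedNode (e.cfg t) v
        · rw [if_pos hocc] at h3
          rcases hcase with ⟨hl, -⟩ | ⟨hl, -⟩ | ⟨hl, hplB⟩
          · have hBnot : C3.Blue ∉ colorsAt (e.cfg t) u := by
              rintro ⟨r', hp', hl'⟩
              have hpl' := allowed_blue_u (hall r') huv hp' hl'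
              exact hG ⟨r', hp', hpl'⟩ r hp hl
            have hW : C3.White ∈ colorsAt (e.cfg t) u := ⟨r, hp, hl⟩
            rw [hl, ruleOut_white hW hBnot] at h3
            exact Or.inl ⟨hp, Or.inl ⟨hl, Or.inr (Or.inl (by rw [h3]; rfl))⟩⟩
          · rw [hl, ruleOut_red hWv] at h3
            by_cases h5 : colorsAt (e.cfg t) u = {C3.Red} ∧ colorsAt (e.cfg t) v = {C3.Blue}
            · rw [if_pos h5] at h3
              exact Or.inl ⟨hp, Or.inr (Or.inl ⟨hl, Or.inr (Or.inr (by rw [h3]; rfl))⟩)⟩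
            · rw [if_neg h5] at h3
              exact Or.inl ⟨hp, Or.inr (Or.inl ⟨hl, Or.inr (Or.inl (by rw [h3]; rfl))⟩)⟩
          · rw [h0] at hplB; exact absurd hplB (by simp)
        · rw [if_neg hocc] at h3
          rcases hcase with ⟨hl, -⟩ | ⟨hl, -⟩ | ⟨hl, hplB⟩
          · exact Or.inl ⟨hp, Or.inl ⟨hl, Or.inr (Or.inr (by rw [h3, hl]))⟩⟩
          · exact Or.inl ⟨hp, Or.inr (Or.inl ⟨hl, Or.inr (Or.inl (by rw [h3, hl]))⟩)⟩
          · rw [h0] at hplB; exact absurd hplB (by simp)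
      · rw [hp] at h3
        rw [look_eval hN hphi hphiN (e.cfg t) v u hadj' Hpos' ((e.cfg t).light r) dir] at h3
        rcases hcase with ⟨hl, -⟩ | ⟨hl, hplB⟩
        · by_cases hocc : occupiedNode (e.cfg t) u
          · rw [if_pos hocc, hl, ruleOut_blue] at h3
            by_cases h5 : colorsAt (e.cfg t) v = {C3.Blue} ∧
                C3.White ∈ colorsAt (e.cfg t) u ∧ phi = 1
            · rw [if_pos h5] at h3
              exact Or.inr ⟨hp, Or.inl ⟨hl, Or.inr (Or.inr (by rw [h3]; rfl))⟩⟩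
            · rw [if_neg h5] at h3
              exact Or.inr ⟨hp, Or.inl ⟨hl, Or.inr (Or.inl (by rw [h3]; rfl))⟩⟩
          · rw [if_neg hocc] at h3
            exact Or.inr ⟨hp, Or.inl ⟨hl, Or.inr (Or.inl (by rw [h3, hl]))⟩⟩
        · rw [h0] at hplB; exact absurd hplB (by simp)
    · rw [h1, h2, h3]
      exact allowed_visible (hpl ▸ hall r)
    · rw [h1, h2, h3]
      exact allowed_move (hpl ▸ hall r)
  · rintro ⟨r1, hp1, hpl1⟩ r2 hp2 hl2
    obtain ⟨h2p, h2l⟩ := white_back hall r2 hp2 hl2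
    rcases e.step t r1 with ⟨h1, h2, h3⟩ | ⟨h0, h1, h2, dir, h3⟩ |
      ⟨c, w, hpl, h1, h2, h3⟩ | ⟨c, w, hpl, h1, h2, h3⟩
    · exact hG ⟨r1, h1.symm.trans hp1, h3.symm.trans hpl1⟩ r2 h2p h2l
    · have hp1t : (e.cfg t).pos r1 = u := h1.symm.trans hp1
      rw [hp1t] at h3
      rw [look_eval hN hphi hphiN (e.cfg t) u v hadj Hpos ((e.cfg t).light r1) dir] at h3
      by_cases hocc : occupiedNode (e.cfg t) v
      · rw [if_pos hocc] at h3
        rw [h3] at hpl1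
        rcases hall r1 with ⟨-, hcase⟩ | ⟨hp', -⟩
        swap
        · exact huv (hp1t.symm.trans hp')
        rcases hcase with ⟨hl, -⟩ | ⟨hl, -⟩ | ⟨hl, hplB⟩
        · by_cases hB : C3.Blue ∈ colorsAt (e.cfg t) u
          · obtain ⟨r3, hp3, hl3⟩ := hB
            exact hG ⟨r3, hp3, allowed_blue_u (hall r3) huv hp3 hl3⟩ r2 h2p h2l
          · have hW : C3.White ∈ colorsAt (e.cfg t) u := ⟨r1, hp1t, hl⟩
            rw [hl, ruleOut_white hW hB] at hpl1
            simp at hpl1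
        · rw [hl, ruleOut_red hWv] at hpl1
          by_cases h5 : colorsAt (e.cfg t) u = {C3.Red} ∧ colorsAt (e.cfg t) v = {C3.Blue}
          · have hWm : C3.White ∈ colorsAt (e.cfg t) u := ⟨r2, h2p, h2l⟩
            rw [h5.1] at hWm
            simp at hWm
          · rw [if_neg h5] at hpl1
            simp at hpl1
        · rw [h0] at hplB; exact absurd hplB (by simp)
      · rw [if_neg hocc] at h3
        rw [h3] at hpl1
        simp at hpl1
        exact huv hpl1.2
    · have hplv : e.plan t r1 = some (C3.Blue, v) := by
        rw [h3] at hpl1; rw [hpl]; exact hpl1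
      exact hG ⟨r1, h1.symm.trans hp1, hplv⟩ r2 h2p h2l
    · rw [h3] at hpl1; exact absurd hpl1 (by simp)

end Gathering


namespace Gathering

section Fairness

variable {N R : ℕ} {CC : Type} {phi : ℕ} {A : Algo CC} (e : AsyncExec N R CC phi A)

lemma plan_succ_of_some {t : ℕ} {r : Fin R} {c : CC} {w : ZMod N}
    (hpl : e.plan t r = some (c, w)) (hne : e.plan (t+1) r ≠ none) :
    e.plan (t+1) r = some (c, w) ∧ (e.cfg (t+1)).pos r = (e.cfg t).pos r := by
  rcases e.step t r with ⟨h1, h2, h3⟩ | ⟨h0, h1, h2, dir, h3⟩ |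
    ⟨c', w', hpl', h1, h2, h3⟩ | ⟨c', w', hpl', h1, h2, h3⟩
  · exact ⟨h3.trans hpl, h1⟩
  · rw [h0] at hpl; exact absurd hpl (by simp)
  · rw [hpl] at hpl'
    simp only [Option.some.injEq, Prod.mk.injEq] at hpl'
    exact ⟨by rw [h3, ← hpl'.1, ← hpl'.2], h1⟩
  · exact absurd h3 hne

lemma clear_is_move {t : ℕ} {r : Fin R} {c : CC} {w : ZMod N}
    (hpl : e.plan t r = some (c, w)) (hnone : e.plan (t+1) r = none) :
    (e.cfg (t+1)).pos r = w ∧ (e.cfg (t+1)).light r = c := by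
  rcases e.step t r with ⟨h1, h2, h3⟩ | ⟨h0, h1, h2, dir, h3⟩ |
    ⟨c', w', hpl', h1, h2, h3⟩ | ⟨c', w', hpl', h1, h2, h3⟩
  · rw [h3, hpl] at hnone; exact absurd hnone (by simp)
  · rw [h0] at hpl; exact absurd hpl (by simp)
  · rw [h3] at hnone; exact absurd hnone (by simp)
  · rw [hpl] at hpl'
    simp only [Option.some.injEq, Prod.mk.injEq] at hpl'
    exact ⟨by rw [h1, ← hpl'.2], by rw [h2, ← hpl'.1]⟩

open Classical in
/-- A pending plan is held unchanged (with a fixed position) until the robot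
finally performs its move. -/
lemma hold_until_clear (r : Fin R) (t : ℕ) (c : CC) (w : ZMod N)
    (hpl : e.plan t r = some (c, w)) :
    ∃ t', t ≤ t' ∧
      (∀ s, t ≤ s → s ≤ t' →
        e.plan s r = some (c, w) ∧ (e.cfg s).pos r = (e.cfg t).pos r) ∧
      e.plan (t'+1) r = none ∧ (e.cfg (t'+1)).pos r = w ∧ (e.cfg (t'+1)).light r = c := by
  obtain ⟨t1, ht1, hne1, hnone1⟩ := e.fair r t
  have hex : ∃ d, e.plan (t + d + 1) r = none := by
    refine ⟨t1 - t, ?_⟩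
    rw [Nat.add_sub_cancel' ht1]
    exact hnone1
  have hd0 := Nat.find_spec hex
  set d0 := Nat.find hex with hd0def
  have key : ∀ s, s ≤ d0 →
      e.plan (t+s) r = some (c, w) ∧ (e.cfg (t+s)).pos r = (e.cfg t).pos r := by
    intro s
    induction s with
    | zero => intro _; exact ⟨hpl, rfl⟩
    | succ n ih =>
      intro hs
      have hn := ih (by omega)
      have hne : e.plan (t+n+1) r ≠ none := by
        intro hnone
        exact Nat.find_min hex (m := n) (by omega) hnone
      have hstep := plan_succ_of_some e hn.1 hne
      exact ⟨hstep.1, hstep.2.trans hn.2⟩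
  have hlast := key d0 le_rfl
  have hclear := clear_is_move e hlast.1 hd0
  refine ⟨t + d0, by omega, ?_, hd0, hclear.1, hclear.2⟩
  intro s hs1 hs2
  have := key (s - t) (by omega)
  rwa [Nat.add_sub_cancel' hs1] at this

open Classical in
/-- By fairness, every robot eventually performs a fresh Look. -/
lemma next_look (r : Fin R) (t : ℕ) :
    ∃ s, t ≤ s ∧ e.plan s r = none ∧
      ∃ dir : Bool,
        e.plan (s+1) r =
          some ((A.out ((e.cfg s).light r)
              (nodeView phi (e.cfg s) ((e.cfg s).pos r) dir)).1,
            moveTarget ((e.cfg s).pos r) dir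
              (A.out ((e.cfg s).light r)
                (nodeView phi (e.cfg s) ((e.cfg s).pos r) dir)).2) ∧
        (e.cfg (s+1)).pos r = (e.cfg s).pos r ∧
        (e.cfg (s+1)).light r = (e.cfg s).light r := by
  obtain ⟨t1, ht1, hne1, hnone1⟩ := e.fair r t
  obtain ⟨t2, ht2, hne2, -⟩ := e.fair r (t1+1)
  have hex : ∃ d, e.plan (t1 + 1 + d) r ≠ none := by
    refine ⟨t2 - (t1+1), ?_⟩
    rwa [Nat.add_sub_cancel' ht2]
  have hd0 := Nat.find_spec hex
  set d0 := Nat.find hex with hd0def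
  have hpos : 0 < d0 := by
    rcases Nat.eq_zero_or_pos d0 with h | h
    · rw [h] at hd0
      simp only [Nat.add_zero] at hd0
      exact absurd hnone1 hd0
    · exact h
  have hsn : e.plan (t1 + d0) r = none := by
    have hmin := Nat.find_min hex (m := d0 - 1) (by omega)
    rw [not_not] at hmin
    have he : t1 + 1 + (d0 - 1) = t1 + d0 := by omega
    rwa [he] at hmin
  have hsm : e.plan (t1 + d0 + 1) r ≠ none := by
    have he : t1 + d0 + 1 = t1 + 1 + d0 := by omega
    rw [he]
    exact hd0
  rcases e.step (t1 + d0) r with ⟨h1, h2, h3⟩ | ⟨h0, h1, h2, dir, h3⟩ |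
    ⟨c', w', hpl', h1, h2, h3⟩ | ⟨c', w', hpl', h1, h2, h3⟩
  · exact absurd (h3.trans hsn) hsm
  · exact ⟨t1 + d0, by omega, hsn, dir, h3, h1, h2⟩
  · rw [hpl'] at hsn; exact absurd hsn (by simp)
  · rw [hpl'] at hsn; exact absurd hsn (by simp)

end Fairness

end Gathering


namespace Gathering

/-- Once all robots are on one node with all pending plans targeting that
node, the configuration is gathered forever. -/
lemma stable_gathered {N R phi : ℕ} (hN : 3 ≤ N) (hphi : 1 ≤ phi)
    (hphiN : (phi:ℤ) ≤ (N:ℤ) - 2)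
    {e : AsyncExec N R C3 phi (algo1 phi)} {u v : ZMod N}
    (hadj : v = u + 1 ∨ v = u - 1)
    {w : ZMod N} (hw : w = u ∨ w = v) {t : ℕ}
    (hall : ∀ r, (e.cfg t).pos r = w)
    (hplans : ∀ r, e.plan t r = none ∨ ∃ c, e.plan t r = some (c, w)) :
    ∀ t', t ≤ t' → ∀ r, (e.cfg t').pos r = w := by
  have huv : u ≠ v := adj_ne hN hadj
  have hadj' : u = v + 1 ∨ u = v - 1 := by
    rcases hadj with h' | h'
    · right; rw [h']; ring
    · left; rw [h']; ring
  have main : ∀ d, (∀ r, (e.cfg (t+d)).pos r = w) ∧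
      (∀ r, e.plan (t+d) r = none ∨ ∃ c, e.plan (t+d) r = some (c, w)) := by
    intro d
    induction d with
    | zero => exact ⟨hall, hplans⟩
    | succ n ih =>
      obtain ⟨hpos, hpl⟩ := ih
      have Hocc : ∀ z, occupiedNode (e.cfg (t+n)) z → z = w := by
        rintro z ⟨r, hr⟩
        rw [← hr]; exact hpos r
      constructor
      · intro r
        show (e.cfg (t+n+1)).pos r = w
        rcases e.step (t+n) r with ⟨h1, h2, h3⟩ | ⟨h0, h1, h2, dir, h3⟩ |
          ⟨c, w', hpl', h1, h2, h3⟩ | ⟨c, w', hpl', h1, h2, h3⟩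
        · rw [h1]; exact hpos r
        · rw [h1]; exact hpos r
        · rw [h1]; exact hpos r
        · rcases hpl r with h | ⟨c2, h⟩
          · rw [h] at hpl'; exact absurd hpl' (by simp)
          · rw [h] at hpl'
            simp only [Option.some.injEq, Prod.mk.injEq] at hpl'
            rw [h1, ← hpl'.2]
      · intro r
        show e.plan (t+n+1) r = none ∨ ∃ c, e.plan (t+n+1) r = some (c, w)
        rcases e.step (t+n) r with ⟨h1, h2, h3⟩ | ⟨h0, h1, h2, dir, h3⟩ |
          ⟨c, w', hpl', h1, h2, h3⟩ | ⟨c, w', hpl', h1, h2, h3⟩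
        · rw [h3]; exact hpl r
        · right
          rw [hpos r] at h3
          rcases hw with hw' | hw'
          · have hoccv : ¬ occupiedNode (e.cfg (t+n)) v := by
              intro hv
              exact huv ((Hocc v hv).trans hw').symm
            have Hpos2 : ∀ z, occupiedNode (e.cfg (t+n)) z → z = u ∨ z = v :=
              fun z hz => Or.inl ((Hocc z hz).trans hw')
            rw [hw'] at h3
            rw [look_eval hN hphi hphiN (e.cfg (t+n)) u v hadj Hpos2 _ dir,
              if_neg hoccv] at h3
            exact ⟨(e.cfg (t+n)).light r, by rw [h3, hw']⟩
          · have hoccu : ¬ occupiedNode (e.cfg (t+n)) u := by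
              intro hu
              exact huv ((Hocc u hu).trans hw')
            have Hpos2 : ∀ z, occupiedNode (e.cfg (t+n)) z → z = v ∨ z = u :=
              fun z hz => Or.inl ((Hocc z hz).trans hw')
            rw [hw'] at h3
            rw [look_eval hN hphi hphiN (e.cfg (t+n)) v u hadj' Hpos2 _ dir,
              if_neg hoccu] at h3
            exact ⟨(e.cfg (t+n)).light r, by rw [h3, hw']⟩
        · rw [h3]
          rcases hpl r with h | ⟨c2, h⟩
          · rw [h] at hpl'; exact absurd hpl' (by simp)
          · rw [h] at hpl'
            simp only [Option.some.injEq, Prod.mk.injEq] at hpl'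
            exact Or.inr ⟨c, by rw [← hpl'.2]⟩
        · exact Or.inl h3
  intro t' ht' r
  have := (main (t' - t)).1 r
  rwa [Nat.add_sub_cancel' ht'] at this

/-- `P1`: no White robot on `u`. -/
def NoWhiteU {N R phi : ℕ} (e : AsyncExec N R C3 phi (algo1 phi)) (u : ZMod N) (t : ℕ) : Prop :=
  ∀ r, (e.cfg t).pos r = u → (e.cfg t).light r ≠ C3.White

lemma NoWhiteU_step {N R phi : ℕ} {e : AsyncExec N R C3 phi (algo1 phi)} {u v : ZMod N} {t : ℕ}
    (hall : ∀ r, allowed u v ((e.cfg t).pos r) ((e.cfg t).light r) (e.plan t r))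
    (hP : NoWhiteU e u t) : NoWhiteU e u (t+1) := by
  intro r hp hl
  obtain ⟨hp', hl'⟩ := white_back hall r hp hl
  exact hP r hp' hl'

/-- `Gclean`: every robot on `v` has either no pending plan or a noop plan. -/
def Gclean {N R phi : ℕ} (e : AsyncExec N R C3 phi (algo1 phi)) (u v : ZMod N) (t : ℕ) : Prop :=
  ∀ r, (e.cfg t).pos r = v → e.plan t r = none ∨ e.plan t r = some (C3.Blue, v)

lemma Gclean_step {N R phi : ℕ} (hN : 3 ≤ N) (hphi : 1 ≤ phi)
    (hphiN : (phi:ℤ) ≤ (N:ℤ) - 2)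
    {e : AsyncExec N R C3 phi (algo1 phi)} {u v : ZMod N}
    (hadj : v = u + 1 ∨ v = u - 1) {t : ℕ}
    (hall : ∀ r, allowed u v ((e.cfg t).pos r) ((e.cfg t).light r) (e.plan t r))
    (hP : NoWhiteU e u t) (hG : Gclean e u v t) : Gclean e u v (t+1) := by
  have huv : u ≠ v := adj_ne hN hadj
  have hadj' : u = v + 1 ∨ u = v - 1 := by
    rcases hadj with h' | h'
    · right; rw [h']; ring
    · left; rw [h']; ring
  have Hpos := inv_Hpos hall
  have Hpos' : ∀ z, occupiedNode (e.cfg t) z → z = v ∨ z = u := fun z hz => (Hpos z hz).symm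
  intro r hp
  rcases e.step t r with ⟨h1, h2, h3⟩ | ⟨h0, h1, h2, dir, h3⟩ |
    ⟨c, w', hpl', h1, h2, h3⟩ | ⟨c, w', hpl', h1, h2, h3⟩
  · rw [h3]; exact hG r (h1.symm.trans hp)
  · right
    have hpt : (e.cfg t).pos r = v := h1.symm.trans hp
    have hlB : (e.cfg t).light r = C3.Blue := by
      rcases hall r with ⟨hp', -⟩ | ⟨-, ⟨hl', -⟩|⟨-, hplR⟩⟩
      · exact absurd (hp'.symm.trans hpt) huv
      · exact hl'
      · rw [h0] at hplR; exact absurd hplR (by simp)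
    rw [hpt] at h3
    rw [look_eval hN hphi hphiN (e.cfg t) v u hadj' Hpos' _ dir] at h3
    by_cases hocc : occupiedNode (e.cfg t) u
    · rw [if_pos hocc, hlB, ruleOut_blue] at h3
      have hcond : ¬ (colorsAt (e.cfg t) v = {C3.Blue} ∧
          C3.White ∈ colorsAt (e.cfg t) u ∧ phi = 1) := by
        rintro ⟨-, ⟨r', hp', hl'⟩, -⟩
        exact hP r' hp' hl'
      rw [if_neg hcond] at h3
      rw [h3]; rfl
    · rw [if_neg hocc] at h3
      rw [h3, hlB]
  · have hpt : (e.cfg t).pos r = v := h1.symm.trans hp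
    rcases hG r hpt with h | h
    · rw [h] at hpl'; exact absurd hpl' (by simp)
    · rw [h] at hpl'
      simp only [Option.some.injEq, Prod.mk.injEq] at hpl'
      right; rw [h3, ← hpl'.1, ← hpl'.2]
  · exact Or.inl h3

/-- Under `NoWhiteU` and `Gclean`, robots on `v` never leave `v`. -/
lemma v_stay {N R phi : ℕ} {e : AsyncExec N R C3 phi (algo1 phi)} {u v : ZMod N} {t : ℕ}
    (hG : Gclean e u v t) {r : Fin R} (hp : (e.cfg t).pos r = v) :
    (e.cfg (t+1)).pos r = v := by
  rcases e.step t r with ⟨h1, h2, h3⟩ | ⟨h0, h1, h2, dir, h3⟩ |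
    ⟨c, w', hpl', h1, h2, h3⟩ | ⟨c, w', hpl', h1, h2, h3⟩
  · rw [h1]; exact hp
  · rw [h1]; exact hp
  · rw [h1]; exact hp
  · rcases hG r hp with h | h
    · rw [h] at hpl'; exact absurd hpl' (by simp)
    · rw [h] at hpl'
      simp only [Option.some.injEq, Prod.mk.injEq] at hpl'
      rw [h1, ← hpl'.2]

/-- Under `Gclean`, a robot on `u` at `t+1` was on `u` at `t`. -/
lemma u_back {N R phi : ℕ} {e : AsyncExec N R C3 phi (algo1 phi)} {u v : ZMod N} {t : ℕ}
    (huv : u ≠ v)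
    (hall : ∀ r, allowed u v ((e.cfg t).pos r) ((e.cfg t).light r) (e.plan t r))
    (hG : Gclean e u v t) {r : Fin R} (hp : (e.cfg (t+1)).pos r = u) :
    (e.cfg t).pos r = u := by
  rcases e.step t r with ⟨h1, h2, h3⟩ | ⟨h0, h1, h2, dir, h3⟩ |
    ⟨c, w', hpl', h1, h2, h3⟩ | ⟨c, w', hpl', h1, h2, h3⟩
  · exact h1.symm.trans hp
  · exact h1.symm.trans hp
  · exact h1.symm.trans hp
  · -- the robot moved to `u`; it cannot have been on `v`
    rcases hall r with ⟨hp', -⟩ | ⟨hp', -⟩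
    · exact hp'
    · exfalso
      rcases hG r hp' with h | h
      · rw [h] at hpl'; exact absurd hpl' (by simp)
      · rw [h] at hpl'
        simp only [Option.some.injEq, Prod.mk.injEq] at hpl'
        exact huv (hpl'.2.trans (h1.symm.trans hp)).symm
  -- done

lemma antitone_stab : ∀ (k : ℕ) (f : ℕ → ℕ), (∀ n m, n ≤ m → f m ≤ f n) → f 0 ≤ k →
    ∃ M, ∀ m, M ≤ m → f m = f M := by
  intro k
  induction k with
  | zero =>
    intro f hf h0
    exact ⟨0, fun m hm => by have := hf 0 m (by omega); omega⟩
  | succ k ih =>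
    intro f hf h0
    by_cases hex : ∃ m, f m < f 0
    · obtain ⟨m0, hm0⟩ := hex
      obtain ⟨M, hM⟩ := ih (fun n => f (m0 + n)) (fun n m h => hf _ _ (by omega))
        (by show f (m0 + 0) ≤ k; rw [Nat.add_zero]; omega)
      refine ⟨m0 + M, fun m hm => ?_⟩
      have h1 : f (m0 + (m - m0)) = f (m0 + M) := hM (m - m0) (by omega)
      rwa [Nat.add_sub_cancel' (show m0 ≤ m by omega)] at h1
    · push_neg at hex
      exact ⟨0, fun m hm => le_antisymm (hf 0 m (by omega)) (hex m)⟩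

end Gathering


namespace Gathering

/-- White robots on `u`. -/
def Wset {N R phi : ℕ} (e : AsyncExec N R C3 phi (algo1 phi)) (u : ZMod N) (t : ℕ) :
    Set (Fin R) :=
  {r | (e.cfg t).pos r = u ∧ (e.cfg t).light r = C3.White}

/-- Robots on `v` with an outdated plan `(Red, u)`. -/
def Gv {N R phi : ℕ} (e : AsyncExec N R C3 phi (algo1 phi)) (u v : ZMod N) (t : ℕ) :
    Set (Fin R) :=
  {r | (e.cfg t).pos r = v ∧ e.plan t r = some (C3.Red, u)}

lemma wset_back {N R phi : ℕ} {e : AsyncExec N R C3 phi (algo1 phi)} {u v : ZMod N}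
    {t0 : ℕ} (hinv : ∀ t, t0 ≤ t → Inv e u v t) :
    ∀ s t, t0 ≤ s → s ≤ t → Wset e u t ⊆ Wset e u s := by
  intro s t hs hst
  induction t, hst using Nat.le_induction with
  | base => exact subset_rfl
  | succ t ht ih =>
    intro r hr
    apply ih
    exact white_back (hinv t (hs.trans ht)).1 r hr.1 hr.2

lemma gv_step {N R phi : ℕ} (hN : 3 ≤ N) (hphi : 1 ≤ phi) (hphiN : (phi:ℤ) ≤ (N:ℤ) - 2)
    {e : AsyncExec N R C3 phi (algo1 phi)} {u v : ZMod N} (hadj : v = u + 1 ∨ v = u - 1)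
    {t : ℕ}
    (hall : ∀ r, allowed u v ((e.cfg t).pos r) ((e.cfg t).light r) (e.plan t r))
    (hP : NoWhiteU e u t) :
    Gv e u v (t+1) ⊆ Gv e u v t := by
  have huv : u ≠ v := adj_ne hN hadj
  have hadj' : u = v + 1 ∨ u = v - 1 := by
    rcases hadj with h' | h'
    · right; rw [h']; ring
    · left; rw [h']; ring
  have Hpos := inv_Hpos hall
  have Hpos' : ∀ z, occupiedNode (e.cfg t) z → z = v ∨ z = u := fun z hz => (Hpos z hz).symm
  rintro r ⟨hp, hpl⟩
  rcases e.step t r with ⟨h1, h2, h3⟩ | ⟨h0, h1, h2, dir, h3⟩ |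
    ⟨c, w', hpl', h1, h2, h3⟩ | ⟨c, w', hpl', h1, h2, h3⟩
  · exact ⟨h1.symm.trans hp, h3.symm.trans hpl⟩
  · exfalso
    have hpt : (e.cfg t).pos r = v := h1.symm.trans hp
    have hlB : (e.cfg t).light r = C3.Blue := by
      rcases hall r with ⟨hp', -⟩ | ⟨-, ⟨hl', -⟩|⟨-, hplR⟩⟩
      · exact absurd (hp'.symm.trans hpt) huv
      · exact hl'
      · rw [h0] at hplR; exact absurd hplR (by simp)
    rw [hpt] at h3
    rw [look_eval hN hphi hphiN (e.cfg t) v u hadj' Hpos' _ dir] at h3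
    by_cases hocc : occupiedNode (e.cfg t) u
    · rw [if_pos hocc, hlB, ruleOut_blue] at h3
      have hcond : ¬ (colorsAt (e.cfg t) v = {C3.Blue} ∧
          C3.White ∈ colorsAt (e.cfg t) u ∧ phi = 1) := by
        rintro ⟨-, ⟨r', hp', hl'⟩, -⟩
        exact hP r' hp' hl'
      rw [if_neg hcond] at h3
      rw [h3] at hpl
      simp at hpl
    · rw [if_neg hocc, hlB] at h3
      rw [h3] at hpl
      simp at hpl
  · refine ⟨h1.symm.trans hp, ?_⟩
    rw [h3] at hpl
    rw [hpl']
    exact hpl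
  · rw [h3] at hpl; exact absurd hpl (by simp)

/-- Step A: either all White robots on `u` eventually disappear, or the
execution gathers. -/
lemma stepA {N R phi : ℕ} (hN : 3 ≤ N) (hphi : 1 ≤ phi) (hphiN : (phi:ℤ) ≤ (N:ℤ) - 2)
    {e : AsyncExec N R C3 phi (algo1 phi)} {u v : ZMod N} (hadj : v = u + 1 ∨ v = u - 1)
    {t0 : ℕ} (hinv : ∀ t, t0 ≤ t → Inv e u v t) :
    ∀ n t, t0 ≤ t → (Wset e u t).ncard ≤ n →
      ∃ T, t ≤ T ∧ (NoWhiteU e u T ∨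
        ∃ w, ∀ t', T ≤ t' → ∀ r, (e.cfg t').pos r = w) := by
  have huv : u ≠ v := adj_ne hN hadj
  intro n
  induction n with
  | zero =>
    intro t ht hn
    refine ⟨t, le_rfl, Or.inl ?_⟩
    intro r hp hl
    have hmem : r ∈ Wset e u t := ⟨hp, hl⟩
    have hpos : 0 < (Wset e u t).ncard :=
      (Set.ncard_pos (Set.toFinite _)).mpr ⟨r, hmem⟩
    omega
  | succ n ih =>
    intro t ht hn
    by_cases hle : (Wset e u t).ncard ≤ n
    · exact ih t ht hle
    have hne : (Wset e u t).Nonempty := by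
      rw [Set.nonempty_iff_ne_empty]
      intro h
      rw [h, Set.ncard_empty] at hle
      omega
    obtain ⟨r, hr⟩ := hne
    obtain ⟨s, hts, hplnone, dir, hplan, hps, hls⟩ := next_look e r t
    by_cases hrs : r ∈ Wset e u s
    case neg =>
      have hsub : Wset e u s ⊆ Wset e u t := wset_back hinv t s ht hts
      have hss : Wset e u s ⊂ Wset e u t := ⟨hsub, fun hsup => hrs (hsup hr)⟩
      have hlt : (Wset e u s).ncard < (Wset e u t).ncard :=
        Set.ncard_lt_ncard hss (Set.toFinite _)
      obtain ⟨T, hT, hres⟩ := ih s (ht.trans hts) (by omega)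
      exact ⟨T, hts.trans hT, hres⟩
    case pos =>
      obtain ⟨hpu, hlw⟩ := hrs
      obtain ⟨hall_s, hG_s⟩ := hinv s (ht.trans hts)
      have Hpos_s := inv_Hpos hall_s
      rw [hpu] at hplan
      rw [look_eval hN hphi hphiN (e.cfg s) u v hadj Hpos_s _ dir] at hplan
      by_cases hocc : occupiedNode (e.cfg s) v
      · rw [if_pos hocc] at hplan
        have hBnot : C3.Blue ∉ colorsAt (e.cfg s) u := by
          rintro ⟨r', hp', hl'⟩
          exact hG_s ⟨r', hp', allowed_blue_u (hall_s r') huv hp' hl'⟩ r hpu hlw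
        have hW : C3.White ∈ colorsAt (e.cfg s) u := ⟨r, hpu, hlw⟩
        rw [hlw, ruleOut_white hW hBnot] at hplan
        have hplan' : e.plan (s+1) r = some (C3.Red, u) := hplan
        obtain ⟨t', hst', hhold, hclr, hposc, hlightc⟩ :=
          hold_until_clear e r (s+1) C3.Red u hplan'
        have hrout : r ∉ Wset e u (t'+1) := by
          rintro ⟨-, hl2⟩
          rw [hlightc] at hl2
          exact C3.noConfusion hl2
        have hsub : Wset e u (t'+1) ⊆ Wset e u t :=
          wset_back hinv t (t'+1) ht (by omega)
        have hss : Wset e u (t'+1) ⊂ Wset e u t := ⟨hsub, fun hsup => hrout (hsup hr)⟩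
        have hlt : (Wset e u (t'+1)).ncard < (Wset e u t).ncard :=
          Set.ncard_lt_ncard hss (Set.toFinite _)
        obtain ⟨T, hT, hres⟩ := ih (t'+1) (by omega) (by omega)
        exact ⟨T, by omega, hres⟩
      · -- v unoccupied at the Look: all robots are on `u` and all plans target `u`
        rw [if_neg hocc] at hplan
        have hallu : ∀ r', (e.cfg s).pos r' = u := by
          intro r'
          rcases Hpos_s _ ⟨r', rfl⟩ with h | h
          · exact h
          · exact absurd ⟨r', h⟩ hocc
        have hplansu : ∀ r', e.plan s r' = none ∨ ∃ c, e.plan s r' = some (c, u) := by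
          intro r'
          rcases hall_s r' with ⟨hp', hc⟩ | ⟨hp', -⟩
          · rcases hc with ⟨-, h'|h'|h'⟩ | ⟨-, h'|h'|h'⟩ | ⟨-, h'⟩
            · exact Or.inl h'
            · exact Or.inr ⟨C3.Red, h'⟩
            · exact Or.inr ⟨C3.White, h'⟩
            · exact Or.inl h'
            · exact Or.inr ⟨C3.Red, h'⟩
            · exact absurd hlw (hG_s ⟨r', hp', h'⟩ r hpu)
            · exact absurd hlw (hG_s ⟨r', hp', h'⟩ r hpu)
          · exact absurd ⟨r', hp'⟩ hocc
        exact ⟨s, hts, Or.inr ⟨u,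
          stable_gathered hN hphi hphiN hadj (Or.inl rfl) hallu hplansu⟩⟩

/-- Step B: outdated `(Red, u)` plans on `v` eventually disappear. -/
lemma stepB {N R phi : ℕ} (hN : 3 ≤ N) (hphi : 1 ≤ phi) (hphiN : (phi:ℤ) ≤ (N:ℤ) - 2)
    {e : AsyncExec N R C3 phi (algo1 phi)} {u v : ZMod N} (hadj : v = u + 1 ∨ v = u - 1)
    {t0 : ℕ} (hinv : ∀ t, t0 ≤ t → Inv e u v t)
    (hNW : ∀ t, t0 ≤ t → NoWhiteU e u t) :
    ∀ n t, t0 ≤ t → (Gv e u v t).ncard ≤ n → ∃ T, t ≤ T ∧ Gv e u v T = ∅ := by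
  have huv : u ≠ v := adj_ne hN hadj
  have hchain : ∀ s t, t0 ≤ s → s ≤ t → Gv e u v t ⊆ Gv e u v s := by
    intro s t hs hst
    induction t, hst using Nat.le_induction with
    | base => exact subset_rfl
    | succ t ht ih =>
      refine subset_trans ?_ ih
      exact gv_step hN hphi hphiN hadj (hinv t (hs.trans ht)).1 (hNW t (hs.trans ht))
  intro n
  induction n with
  | zero =>
    intro t ht hn
    exact ⟨t, le_rfl, (Set.ncard_eq_zero (Set.toFinite _)).mp (by omega)⟩
  | succ n ih =>
    intro t ht hn
    by_cases hle : (Gv e u v t).ncard ≤ n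
    · exact ih t ht hle
    have hne : (Gv e u v t).Nonempty := by
      rw [Set.nonempty_iff_ne_empty]
      intro h
      rw [h, Set.ncard_empty] at hle
      omega
    obtain ⟨r, hr, hpl⟩ := hne
    obtain ⟨t', htt', hhold, hclr, hposc, hlightc⟩ := hold_until_clear e r t C3.Red u hpl
    have hrout : r ∉ Gv e u v (t'+1) := by
      rintro ⟨hp2, -⟩
      exact huv (hposc.symm.trans hp2)
    have hsub : Gv e u v (t'+1) ⊆ Gv e u v t := hchain t (t'+1) ht (by omega)
    have hss : Gv e u v (t'+1) ⊂ Gv e u v t := ⟨hsub, fun hsup => hrout (hsup ⟨hr, hpl⟩)⟩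
    have hlt : (Gv e u v (t'+1)).ncard < (Gv e u v t).ncard :=
      Set.ncard_lt_ncard hss (Set.toFinite _)
    obtain ⟨T, hT, hres⟩ := ih (t'+1) (by omega) (by omega)
    exact ⟨T, by omega, hres⟩

end Gathering


namespace Gathering

/-- Step C: once there are no Whites on `u` and no outdated plans on `v`,
the execution gathers. -/
lemma stepC {N R phi : ℕ} (hN : 3 ≤ N) (hphi : 1 ≤ phi) (hphiN : (phi:ℤ) ≤ (N:ℤ) - 2)
    {e : AsyncExec N R C3 phi (algo1 phi)} {u v : ZMod N} (hadj : v = u + 1 ∨ v = u - 1)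
    {t0 : ℕ} (hinv : ∀ t, t0 ≤ t → Inv e u v t)
    (hNW : ∀ t, t0 ≤ t → NoWhiteU e u t)
    (hGc : ∀ t, t0 ≤ t → Gclean e u v t) :
    ∃ T, t0 ≤ T ∧ ∃ w, ∀ t', T ≤ t' → ∀ r, (e.cfg t').pos r = w := by
  have huv : u ≠ v := adj_ne hN hadj
  have hHp : ∀ t, t0 ≤ t → ∀ z, occupiedNode (e.cfg t) z → z = u ∨ z = v :=
    fun t ht => inv_Hpos (hinv t ht).1
  by_cases hC1 : ∃ t', t0 ≤ t' ∧ ∀ r, (e.cfg t').pos r ≠ u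
  · obtain ⟨t', ht', hnu⟩ := hC1
    have hvall : ∀ r, (e.cfg t').pos r = v :=
      fun r => (hHp t' ht' _ ⟨r, rfl⟩).resolve_left (hnu r)
    have hplans : ∀ r, e.plan t' r = none ∨ ∃ c, e.plan t' r = some (c, v) := by
      intro r
      rcases hGc t' ht' r (hvall r) with h | h
      · exact Or.inl h
      · exact Or.inr ⟨C3.Blue, h⟩
    exact ⟨t', ht', v, stable_gathered hN hphi hphiN hadj (Or.inr rfl) hvall hplans⟩
  · push_neg at hC1
    have huchain : ∀ s t, t0 ≤ s → s ≤ t → ∀ r, (e.cfg t).pos r = u →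
        (e.cfg s).pos r = u := by
      intro s t hs hst
      induction t, hst using Nat.le_induction with
      | base => exact fun r h => h
      | succ t ht ih =>
        intro r h
        exact ih r (u_back huv (hinv t (hs.trans ht)).1 (hGc t (hs.trans ht)) h)
    have hmono : ∀ n m, n ≤ m →
        ({r : Fin R | (e.cfg (t0+m)).pos r = u}).ncard ≤
          ({r : Fin R | (e.cfg (t0+n)).pos r = u}).ncard := by
      intro n m h
      refine Set.ncard_le_ncard ?_ (Set.toFinite _)
      intro r hr
      exact huchain (t0+n) (t0+m) (by omega) (by omega) r hr
    obtain ⟨M, hM⟩ := antitone_stab (({r : Fin R | (e.cfg (t0+0)).pos r = u}).ncard)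
      (fun d => ({r : Fin R | (e.cfg (t0+d)).pos r = u}).ncard) hmono le_rfl
    set T3 := t0 + M with hT3
    have hsetconst : ∀ t', T3 ≤ t' →
        {r : Fin R | (e.cfg t').pos r = u} = {r : Fin R | (e.cfg T3).pos r = u} := by
      intro t' h
      have hsub : {r : Fin R | (e.cfg t').pos r = u} ⊆ {r | (e.cfg T3).pos r = u} :=
        fun r hr => huchain T3 t' (by omega) h r hr
      have h1 : ({r : Fin R | (e.cfg (t0 + (t' - t0))).pos r = u}).ncard =
          ({r : Fin R | (e.cfg (t0 + M)).pos r = u}).ncard := hM (t' - t0) (by omega)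
      rw [show t0 + (t' - t0) = t' by omega] at h1
      exact Set.eq_of_subset_of_ncard_le hsub (le_of_eq h1.symm) (Set.toFinite _)
    have hukeep : ∀ t', T3 ≤ t' → ∀ r, (e.cfg t').pos r = u →
        ∀ t'', T3 ≤ t'' → (e.cfg t'').pos r = u := by
      intro t' h r hr t'' h''
      have h1 : r ∈ {r : Fin R | (e.cfg T3).pos r = u} := by
        rw [← hsetconst t' h]; exact hr
      show r ∈ {r : Fin R | (e.cfg t'').pos r = u}
      rw [hsetconst t'' h'']
      exact h1
    by_cases hC2 : ∃ t4, T3 ≤ t4 ∧ ∃ r4, (e.cfg t4).pos r4 = v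
    case neg =>
      push_neg at hC2
      refine ⟨T3, by omega, u, fun t' h r => ?_⟩
      rcases hHp t' (by omega) _ ⟨r, rfl⟩ with h' | h'
      · exact h'
      · exact absurd h' (hC2 t' h r)
    case pos =>
      obtain ⟨T4, hT4, r4, hr4⟩ := hC2
      exfalso
      have hvkeep : ∀ t', T4 ≤ t' → (e.cfg t').pos r4 = v := by
        intro t' h
        induction t', h using Nat.le_induction with
        | base => exact hr4
        | succ t' h ih => exact v_stay (hGc t' (by omega)) ih
      have claim_noB : ∀ t', T4 ≤ t' → ∀ r, (e.cfg t').pos r = u →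
          e.plan t' r ≠ some (C3.Blue, v) := by
        intro t' h r hr hplB
        obtain ⟨t'', h1, hhold, hclr, hposc, -⟩ := hold_until_clear e r t' C3.Blue v hplB
        have h2 : (e.cfg (t''+1)).pos r = u :=
          hukeep t' (by omega) r hr (t''+1) (by omega)
        exact huv (h2.symm.trans hposc)
      have claim_red : ∀ t', T4 ≤ t' → ∀ r, (e.cfg t').pos r = u →
          (e.cfg t').light r = C3.Red := by
        intro t' h r hr
        cases hcl : (e.cfg t').light r with
        | White => exact absurd hcl (hNW t' (by omega) r hr)
        | Red => rfl
        | Blue =>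
          exact absurd (allowed_blue_u ((hinv t' (by omega)).1 r) huv hr hcl)
            (claim_noB t' h r hr)
      have hvblue : ∀ t', T4 ≤ t' → ∀ r', (e.cfg t').pos r' = v →
          (e.cfg t').light r' = C3.Blue := by
        intro t' h r' hp'
        rcases (hinv t' (by omega)).1 r' with ⟨hp'', -⟩ | ⟨-, ⟨hl'', -⟩|⟨-, hplR⟩⟩
        · exact absurd (hp''.symm.trans hp') huv
        · exact hl''
        · rcases hGc t' (by omega) r' hp' with hh | hh
          · rw [hh] at hplR; exact absurd hplR (by simp)
          · rw [hh] at hplR; simp at hplR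
      have hcolu : ∀ t', T4 ≤ t' → colorsAt (e.cfg t') u = {C3.Red} := by
        intro t' h
        apply subset_antisymm
        · rintro c ⟨r', hp', hl'⟩
          rw [← hl', claim_red t' h r' hp']
          rfl
        · rintro c hc
          obtain ⟨r0, hp0⟩ := hC1 t' (by omega)
          rw [Set.mem_singleton_iff] at hc
          exact ⟨r0, hp0, by rw [claim_red t' h r0 hp0, hc]⟩
      have hcolv : ∀ t', T4 ≤ t' → colorsAt (e.cfg t') v = {C3.Blue} := by
        intro t' h
        apply subset_antisymm
        · rintro c ⟨r', hp', hl'⟩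
          rw [← hl', hvblue t' h r' hp']
          rfl
        · rintro c hc
          rw [Set.mem_singleton_iff] at hc
          exact ⟨r4, hvkeep t' h, by rw [hvblue t' h r4 (hvkeep t' h), hc]⟩
      obtain ⟨r0, hp0⟩ := hC1 T4 (by omega)
      obtain ⟨s, hs, hplnone, dir, hplan, -, -⟩ := next_look e r0 T4
      have hp0s : (e.cfg s).pos r0 = u := hukeep T4 (by omega) r0 hp0 s (by omega)
      rw [hp0s] at hplan
      rw [look_eval hN hphi hphiN (e.cfg s) u v hadj
        (inv_Hpos (hinv s (by omega)).1) _ dir] at hplan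
      have hoccv : occupiedNode (e.cfg s) v := ⟨r4, hvkeep s hs⟩
      rw [if_pos hoccv, claim_red s hs r0 hp0s] at hplan
      have hWnv : C3.White ∉ colorsAt (e.cfg s) v := by rw [hcolv s hs]; simp
      rw [ruleOut_red hWnv, if_pos ⟨hcolu s hs, hcolv s hs⟩] at hplan
      exact claim_noB (s+1) (by omega) r0
        (hukeep s (by omega) r0 hp0s (s+1) (by omega)) hplan

end Gathering


namespace Gathering

/-- **Lemma 8.** Under Algorithm 1, from configuration `Conf RW-MB` the
execution achieves gathering: all robots eventually occupy a single node and
remain there forever. -/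
theorem algo1_gathers_from_RWMB
    (N R phi Minit Oinit : ℕ) (hN : 3 ≤ N) (hphi : 1 ≤ phi) (hM : Odd Minit)
    (e : AsyncExec N R C3 phi (algo1 phi))
    (hInit : AdmissibleInit phi (e.cfg 0) C3.White Minit Oinit)
    (t0 : ℕ) (hconf : ConfRWMB e t0) :
    ∃ (t1 : ℕ) (u : ZMod N), t0 ≤ t1 ∧
      ∀ t', t1 ≤ t' → ∀ r, (e.cfg t').pos r = u := by
  obtain ⟨u, v, hadj, hBu, hBv, hOcc, hU, hRu, hV, hBl⟩ := hconf
  have huv : u ≠ v := adj_ne hN hadj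
  -- the visibility range is at most `N - 2`
  have hphiN : (phi:ℤ) ≤ (N:ℤ) - 2 := by
    by_contra hlt
    push_neg at hlt
    obtain ⟨huocc, dir, hside, -⟩ := hBu
    have hvocc : occupiedNode (e.cfg t0) v := hBv.1
    have hNZ : (3:ℤ) ≤ (N:ℤ) := by exact_mod_cast hN
    have h1 := hside 1 le_rfl (by omega)
    have h2 := hside ((N:ℤ) - 1) (by omega) (by omega)
    have hcast : ((((N:ℤ) - 1) : ℤ) : ZMod N) = -1 := by
      push_cast
      rw [ZMod.natCast_self]
      ring
    have hcastn : (((-((N:ℤ) - 1)) : ℤ) : ZMod N) = 1 := by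
      push_cast
      rw [ZMod.natCast_self]
      ring
    rcases hadj with hv | hv
    · cases dir
      · apply h2
        simp only [Bool.false_eq_true, if_false, hcastn]
        rw [← hv]
        exact hvocc
      · apply h1
        simp only [if_true, Int.cast_one]
        rw [← hv]
        exact hvocc
    · cases dir
      · apply h1
        simp only [Bool.false_eq_true, if_false]
        have : (((-1:ℤ)) : ZMod N) = -1 := by push_cast; ring
        rw [this, show u + (-1 : ZMod N) = v by rw [hv]; ring]
        exact hvocc
      · apply h2
        simp only [if_true, hcast]
        rw [show u + (-1 : ZMod N) = v by rw [hv]; ring]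
        exact hvocc
  -- the invariant holds initially and forever
  have hInv0 : Inv e u v t0 := by
    constructor
    · intro r
      rcases hOcc _ ⟨r, rfl⟩ with hp | hp
      · obtain ⟨hlight, hplan⟩ := hU r hp
        rcases hlight with hl | hl
        · exact Or.inl ⟨hp, Or.inr (Or.inl ⟨hl, Or.inl hplan⟩)⟩
        · exact Or.inl ⟨hp, Or.inl ⟨hl, Or.inl hplan⟩⟩
      · obtain ⟨hlight, hplan, hnone⟩ := hV r hp
        rcases hplan with hpl | hpl
        · exact Or.inr ⟨hp, Or.inl ⟨hnone hpl, Or.inl hpl⟩⟩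
        · rcases hlight with hl | hl
          · exact Or.inr ⟨hp, Or.inr ⟨hl, hpl⟩⟩
          · exact Or.inr ⟨hp, Or.inl ⟨hl, Or.inr (Or.inr hpl)⟩⟩
    · rintro ⟨r1, hp1, hpl1⟩
      have h := (hU r1 hp1).2
      rw [h] at hpl1
      exact absurd hpl1 (by simp)
  have hinv_all : ∀ t, t0 ≤ t → Inv e u v t := by
    intro t ht
    induction t, ht using Nat.le_induction with
    | base => exact hInv0
    | succ t ht ih => exact inv_step hN hphi hphiN hadj ih
  -- Step A : the White robots on `u` disappear (or we gather early)
  obtain ⟨T1, hT1, hres⟩ :=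
    stepA hN hphi hphiN hadj hinv_all ((Wset e u t0).ncard) t0 le_rfl le_rfl
  rcases hres with hNW1 | ⟨w, hg⟩
  swap
  · exact ⟨T1, w, hT1, hg⟩
  have hNWall : ∀ t, T1 ≤ t → NoWhiteU e u t := by
    intro t ht
    induction t, ht using Nat.le_induction with
    | base => exact hNW1
    | succ t ht ih => exact NoWhiteU_step (hinv_all t (hT1.trans ht)).1 ih
  -- Step B : the outdated plans on `v` disappear
  obtain ⟨T2, hT2, hGv2⟩ :=
    stepB hN hphi hphiN hadj (fun t ht => hinv_all t (hT1.trans ht)) hNWall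
      ((Gv e u v T1).ncard) T1 le_rfl le_rfl
  have hGvall : ∀ t, T2 ≤ t → Gv e u v t = ∅ := by
    intro t ht
    induction t, ht using Nat.le_induction with
    | base => exact hGv2
    | succ t ht ih =>
      have hsub := gv_step hN hphi hphiN hadj
        (hinv_all t (hT1.trans (hT2.trans ht))).1 (hNWall t (hT2.trans ht))
      rw [ih] at hsub
      exact Set.subset_empty_iff.mp hsub
  have hGcall : ∀ t, T2 ≤ t → Gclean e u v t := by
    intro t ht r hp
    rcases (hinv_all t (hT1.trans (hT2.trans ht))).1 r with
      ⟨hp', -⟩ | ⟨-, ⟨-, h'|h'|h'⟩|⟨-, h'⟩⟩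
    · exact absurd (hp'.symm.trans hp) huv
    · exact Or.inl h'
    · exact Or.inr h'
    · exfalso
      have hmem : r ∈ Gv e u v t := ⟨hp, h'⟩
      rw [hGvall t ht] at hmem
      exact hmem
    · exfalso
      have hmem : r ∈ Gv e u v t := ⟨hp, h'⟩
      rw [hGvall t ht] at hmem
      exact hmem
  -- Step C : gathering
  obtain ⟨T, hT, w, hg⟩ := stepC hN hphi hphiN hadj
    (fun t ht => hinv_all t (hT1.trans (hT2.trans ht)))
    (fun t ht => hNWall t (hT2.trans ht)) hGcall
  exact ⟨T, w, hT1.trans (hT2.trans hT), hg⟩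

end Gathering
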